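/- arXiv:2301.05476 — 5 statements merged into one kernel-verified Lean document; each statement's English description precedes it below -/
import Mathlib

section
/- Let Q be a finite quiver, let d ≥ 2, and let ρ be a d-covering set of paths of Q, each of length d, such that for every m ≥ 2 every element of R^m has length δ(m) (as holds when the monomial algebra KQ/(ρ) is d-Koszul). Then for every n ≥ 2 and every R ∈ R^n, every subpath of R of length d belongs to ρ. -/
open Quiver

universe u v

variable {V : Type u} [Quiver.{v + 1} V]

/-- The type of paths of a quiver, bundled with their endpoints. -/
abbrev SPath (V : Type u) [Quiver.{v + 1} V] := Σ a b : V, Quiver.Path a b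

/-- The type of arrows of a quiver, bundled with their endpoints. -/
abbrev SArrow (V : Type u) [Quiver.{v + 1} V] := Σ a b : V, a ⟶ b

/-- A set of paths in a quiver, given as a predicate on paths with arbitrary endpoints. -/
abbrev PathSet (V : Type u) [Quiver.{v + 1} V] := ∀ ⦃a b : V⦄, Quiver.Path a b → Prop

/-- `p` is a prefix of `q`. -/
def IsPrefixP {a b c : V} (p : Quiver.Path a b) (q : Quiver.Path a c) : Prop :=
  ∃ p' : Quiver.Path b c, q = p.comp p'

/-- `p` is a suffix of `q`. -/
def IsSuffixP {a b c : V} (p : Quiver.Path b c) (q : Quiver.Path a c) : Prop :=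
  ∃ p' : Quiver.Path a b, q = p'.comp p

/-- `p` is a subpath of `q`. -/
def IsSubpathP {b c a e : V} (p : Quiver.Path b c) (q : Quiver.Path a e) : Prop :=
  ∃ (u : Quiver.Path a b) (v : Quiver.Path c e), q = (u.comp p).comp v

/-- `q` overlaps `p` with overlap `p.comp u`: there are paths `u`, `v` with
`pu = vq` and `1 ≤ ℓ(u) < ℓ(q)`. -/
def OverlapsWith {x y a b : V} (q : Quiver.Path x y) (p : Quiver.Path a b)
    (u : Quiver.Path b y) : Prop :=
  ∃ v : Quiver.Path a x, p.comp u = v.comp q ∧ 1 ≤ u.length ∧ u.length < q.length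

/-- `q` properly overlaps `p` with overlap `p.comp u`: additionally `ℓ(v) ≥ 1`. -/
def ProperlyOverlapsWith {x y a b : V} (q : Quiver.Path x y) (p : Quiver.Path a b)
    (u : Quiver.Path b y) : Prop :=
  ∃ v : Quiver.Path a x, p.comp u = v.comp q ∧ 1 ≤ u.length ∧ u.length < q.length ∧
    1 ≤ v.length

/-- `q` properly overlaps `p` (with some overlap). -/
def ProperlyOverlaps {x y a b : V} (q : Quiver.Path x y) (p : Quiver.Path a b) : Prop :=
  ∃ u : Quiver.Path b y, ProperlyOverlapsWith q p u

/-- `ρ` is `d`-covering: whenever `pq ∈ ρ`, `qr ∈ ρ` and `ℓ(q) ≥ 1`, every subpath of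
`pqr` of length `d` lies in `ρ`. -/
def DCovering (d : ℕ) (ρ : PathSet V) : Prop :=
  ∀ ⦃a b c e : V⦄ (p : Quiver.Path a b) (q : Quiver.Path b c) (r : Quiver.Path c e),
    ρ (p.comp q) → ρ (q.comp r) → 1 ≤ q.length →
    ∀ ⦃x y : V⦄ (s : Quiver.Path x y), s.length = d →
      IsSubpathP s ((p.comp q).comp r) → ρ s

/-- The sets `R^n` of (iterated maximal) overlaps: `R^0` = trivial paths, `R^1` = arrows,
`R^2 = ρ`, and for `n ≥ 3`, `R^n` consists of the paths `R^{n-1}u` where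
`R^{n-1} = R^{n-2}p ∈ R^{n-1}`, some element of `ρ` overlaps `p` with overlap `pu`,
and no element of `ρ` overlaps `p` with overlap a proper prefix of `pu`. -/
def RSet (ρ : PathSet V) : ℕ → PathSet V
  | 0 => fun _ _ p => p.length = 0
  | 1 => fun _ _ p => p.length = 1
  | 2 => ρ
  | n + 3 => fun a e R =>
      ∃ (c : V) (Rp : Quiver.Path a c) (u : Quiver.Path c e),
        RSet ρ (n + 2) Rp ∧ R = Rp.comp u ∧
        ∃ (b : V) (Rpp : Quiver.Path a b) (p : Quiver.Path b c),
          RSet ρ (n + 1) Rpp ∧ Rp = Rpp.comp p ∧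
          (∃ (x : V) (q : Quiver.Path x e), ρ q ∧ OverlapsWith q p u) ∧
          ∀ (x y : V) (q : Quiver.Path x y) (u' : Quiver.Path c y),
            ρ q → OverlapsWith q p u' →
            ¬(IsPrefixP (p.comp u') (p.comp u) ∧ u'.length < u.length)

/-- `δ(n) = (n/2)d` if `n` is even, `((n-1)/2)d + 1` if `n` is odd. -/
def deltaF (d n : ℕ) : ℕ := if n % 2 = 0 then n / 2 * d else (n - 1) / 2 * d + 1

/-- The `m`-th power of a closed path. -/
def cpow {a : V} (T : Quiver.Path a a) : ℕ → Quiver.Path a a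
  | 0 => Quiver.Path.nil
  | n + 1 => (cpow T n).comp T

/-- The list of arrows of a path, in order. -/
def arrowList {a : V} : ∀ {b : V}, Quiver.Path a b → List (SArrow V)
  | _, Quiver.Path.nil => []
  | _, Quiver.Path.cons p e => arrowList p ++ [⟨_, _, e⟩]

/-- A closed trail: a nontrivial closed path with pairwise distinct arrows. -/
def IsClosedTrail {a : V} (T : Quiver.Path a a) : Prop :=
  1 ≤ T.length ∧ (arrowList T).Nodup

/-- `q` lies on the closed path `T`: `q` is a subpath of `T^m` for some `m ≥ 1`. -/
def LiesOn {x y a : V} (q : Quiver.Path x y) (T : Quiver.Path a a) : Prop :=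
  ∃ m : ℕ, 1 ≤ m ∧ IsSubpathP q (cpow T m)

/-- `ρ_T ⊆ ρ`: every path of length `d` lying on `T` belongs to `ρ`. -/
def RhoTSub (d : ℕ) (ρ : PathSet V) {a : V} (T : Quiver.Path a a) : Prop :=
  ∀ ⦃x y : V⦄ (q : Quiver.Path x y), q.length = d → LiesOn q T → ρ q

/-- `SegChain A L a b p` : the path `p` decomposes as the composite of the listed
segments, each of length `A`. -/
inductive SegChain (A : ℕ) : List (SPath V) → (a b : V) → Quiver.Path a b → Prop
  | nil (a : V) : SegChain A [] a a Quiver.Path.nil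
  | cons {a b c : V} (α : Quiver.Path a b) (hα : α.length = A) {p : Quiver.Path b c}
      {L : List (SPath V)} (hp : SegChain A L b c p) :
      SegChain A (⟨a, b, α⟩ :: L) a c (α.comp p)

/-- An `A`-path: a path which decomposes into segments of length `A`. -/
def IsAPath (A : ℕ) {a b : V} (p : Quiver.Path a b) : Prop :=
  ∃ L : List (SPath V), SegChain A L a b p

/-- `p` is an `A`-subpath of `q`: a subpath which is an `A`-path starting at a position
that is a multiple of `A`. -/
def IsASubpath (A : ℕ) {b c a e : V} (p : Quiver.Path b c) (q : Quiver.Path a e) : Prop :=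
  ∃ (u : Quiver.Path a b) (v : Quiver.Path c e),
    q = (u.comp p).comp v ∧ A ∣ u.length ∧ IsAPath A p

/-- A closed `A`-trail: a nontrivial closed `A`-path with pairwise distinct `A`-segments. -/
def IsClosedATrail (A : ℕ) {a : V} (T : Quiver.Path a a) : Prop :=
  ∃ L : List (SPath V), SegChain A L a a T ∧ L ≠ [] ∧ L.Nodup

/-- The `A`-path `q` lies on the closed `A`-path `T`: `q` is an `A`-subpath of `T^m` for
some `m ≥ 1`. -/
def ALiesOn (A : ℕ) {x y a : V} (q : Quiver.Path x y) (T : Quiver.Path a a) : Prop :=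
  ∃ m : ℕ, 1 ≤ m ∧ IsASubpath A q (cpow T m)

/-- `ρ_T ⊆ ρ` in the `(D,A)`-setting: every path of length `D` which lies on `T` as an
`A`-path belongs to `ρ`. -/
def ARhoTSub (D A : ℕ) (ρ : PathSet V) {a : V} (T : Quiver.Path a a) : Prop :=
  ∀ ⦃x y : V⦄ (q : Quiver.Path x y), q.length = D → ALiesOn A q T → ρ q

/-- The `(D,A)`-overlap property: every path in `ρ` has length `D`, and whenever
`R₂ ∈ ρ` properly overlaps `R₁ ∈ ρ` with overlap `R₁u`, then `ℓ(u) ≥ A` and some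
`R₃ ∈ ρ` properly overlaps `R₁` with overlap `R₁u'` where `ℓ(u') = A` and `u'` is a
prefix of `u`. -/
def DAOverlapProperty (D A : ℕ) (ρ : PathSet V) : Prop :=
  (∀ ⦃a b : V⦄ (p : Quiver.Path a b), ρ p → p.length = D) ∧
  ∀ ⦃a b x y : V⦄ (R₁ : Quiver.Path a b) (R₂ : Quiver.Path x y) (u : Quiver.Path b y),
    ρ R₁ → ρ R₂ → ProperlyOverlapsWith R₂ R₁ u →
    A ≤ u.length ∧
      ∃ (y' : V) (x' : V) (R₃ : Quiver.Path x' y') (u' : Quiver.Path b y'),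
        ρ R₃ ∧ ProperlyOverlapsWith R₃ R₁ u' ∧ u'.length = A ∧ IsPrefixP u' u

/-- Condition (C1), part (1), for a loop `α`. -/
def CondLoop (d : ℕ) (ρ : PathSet V) {v : V} (α : v ⟶ v) : Prop :=
  ρ (cpow (Quiver.Hom.toPath α) d) ∧
  (∀ ⦃w : V⦄ (β : v ⟶ w), (⟨v, w, β⟩ : SArrow V) ≠ ⟨v, v, α⟩ →
      ¬ ρ ((cpow (Quiver.Hom.toPath α) (d - 1)).comp (Quiver.Hom.toPath β))) ∧
  (∀ ⦃w : V⦄ (β : w ⟶ v), (⟨w, v, β⟩ : SArrow V) ≠ ⟨v, v, α⟩ →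
      ¬ ρ ((Quiver.Hom.toPath β).comp (cpow (Quiver.Hom.toPath α) (d - 1))))

/-- Condition (C1): (1) every loop `α` satisfies `α^d ∈ ρ` and no element of `ρ` has the
form `α^{d-1}β` or `βα^{d-1}` with `β` an arrow distinct from `α`; (2) for every closed
trail `T` with `ℓ(T) > 1` and `ρ_T ⊆ ρ`, no element of `ρ∖ρ_T` begins or ends with an
arrow of `T`. -/
def CondC1 (d : ℕ) (ρ : PathSet V) : Prop :=
  (∀ (v : V) (α : v ⟶ v), CondLoop d ρ α) ∧
  (∀ ⦃a : V⦄ (T : Quiver.Path a a), IsClosedTrail T → 1 < T.length → RhoTSub d ρ T →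
    ∀ ⦃x y : V⦄ (q : Quiver.Path x y), ρ q → ¬(q.length = d ∧ LiesOn q T) →
      (∀ ⦃w : V⦄ (e : x ⟶ w) (q' : Quiver.Path w y),
          q = (Quiver.Hom.toPath e).comp q' → (⟨x, w, e⟩ : SArrow V) ∉ arrowList T) ∧
      (∀ ⦃w : V⦄ (e : w ⟶ y) (q' : Quiver.Path x w),
          q = q'.comp (Quiver.Hom.toPath e) → (⟨w, y, e⟩ : SArrow V) ∉ arrowList T))

/-- Condition (C2): (1) for every `A`-loop `c`, some rotation `c'` of `c` satisfies
`c'^d ∈ ρ` and no element of `ρ` has the form `c'^{d-1}β` or `βc'^{d-1}` with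
`β` a path of length `A` distinct from `c'`; (2) for every closed `A`-trail `T` with at
least two segments and `ρ_T ⊆ ρ`, no element of `ρ∖ρ_T` begins or ends with an
`A`-segment of `T`. -/
def CondC2 (D A d : ℕ) (ρ : PathSet V) : Prop :=
  (∀ ⦃v : V⦄ (c : Quiver.Path v v), c.length = A →
    ∃ (w : V) (p : Quiver.Path v w) (q : Quiver.Path w v), c = p.comp q ∧ p.length < A ∧
      ρ (cpow (q.comp p) d) ∧
      (∀ ⦃x : V⦄ (β : Quiver.Path w x), β.length = A →
          (⟨w, x, β⟩ : SPath V) ≠ ⟨w, w, q.comp p⟩ →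
          ¬ ρ ((cpow (q.comp p) (d - 1)).comp β)) ∧
      (∀ ⦃x : V⦄ (β : Quiver.Path x w), β.length = A →
          (⟨x, w, β⟩ : SPath V) ≠ ⟨w, w, q.comp p⟩ →
          ¬ ρ (β.comp (cpow (q.comp p) (d - 1))))) ∧
  (∀ ⦃a : V⦄ (T : Quiver.Path a a) (L : List (SPath V)),
      SegChain A L a a T → L.Nodup → 2 ≤ L.length → ARhoTSub D A ρ T →
      ∀ ⦃x y : V⦄ (q : Quiver.Path x y), ρ q → ¬(q.length = D ∧ ALiesOn A q T) →
        (∀ ⦃w : V⦄ (α : Quiver.Path x w) (q' : Quiver.Path w y),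
            q = α.comp q' → (⟨x, w, α⟩ : SPath V) ∉ L) ∧
        (∀ ⦃w : V⦄ (α : Quiver.Path w y) (q' : Quiver.Path x w),
            q = q'.comp α → (⟨w, y, α⟩ : SPath V) ∉ L))

lemma aux_pred_of_trivial_ends (ρ : PathSet V) {a b x y : V} {s : Quiver.Path x y}
    {U : Quiver.Path a x} {W : Quiver.Path y b}
    (hU : U.length = 0) (hW : W.length = 0) (h : ρ ((U.comp s).comp W)) : ρ s := by
  cases U with
  | nil =>
    cases W with
    | nil => simpa using h
    | cons _ _ => simp at hW
  | cons _ _ => simp at hU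

lemma aux_suffix_split {a b : V} (p : Quiver.Path a b) :
    ∀ (k : ℕ), k ≤ p.length →
    ∃ (c : V) (x : Quiver.Path a c) (y : Quiver.Path c b), p = x.comp y ∧ y.length = k := by
  induction p with
  | nil =>
    intro k hk
    simp only [Quiver.Path.length_nil, Nat.le_zero] at hk
    exact ⟨a, .nil, .nil, by simp, by simp [hk]⟩
  | cons p' e ih =>
    intro k hk
    cases k with
    | zero => exact ⟨_, p'.cons e, .nil, by simp, rfl⟩
    | succ k' =>
      obtain ⟨c, x, y, hxy, hy⟩ := ih k' (by simpa using Nat.le_of_succ_le_succ hk)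
      exact ⟨c, x, y.cons e, by rw [hxy, Quiver.Path.comp_cons], by simp [hy]⟩

lemma aux_comp_eq_comp {a : V} :
    ∀ {c b₁ b₂ : V} (p₁ : Quiver.Path a b₁) (q₁ : Quiver.Path b₁ c)
      (p₂ : Quiver.Path a b₂) (q₂ : Quiver.Path b₂ c),
      p₁.comp q₁ = p₂.comp q₂ → q₁.length ≤ q₂.length →
      ∃ w : Quiver.Path b₂ b₁, p₁ = p₂.comp w ∧ q₂ = w.comp q₁ := by
  intro c b₁ b₂ p₁ q₁
  induction q₁ generalizing b₂ with
  | nil =>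
    intro p₂ q₂ h _
    exact ⟨q₂, by simpa using h, by simp⟩
  | cons q₁' e ih =>
    intro p₂ q₂ h hlen
    cases q₂ with
    | nil => simp at hlen
    | cons q₂' e' =>
      rw [Quiver.Path.comp_cons, Quiver.Path.comp_cons] at h
      obtain rfl := Quiver.Path.obj_eq_of_cons_eq_cons h
      have hpath : p₁.comp q₁' = p₂.comp q₂' := eq_of_heq (Quiver.Path.heq_of_cons_eq_cons h)
      have hhom : e = e' := eq_of_heq (Quiver.Path.hom_heq_of_cons_eq_cons h)
      obtain ⟨w, hw₁, hw₂⟩ := ih p₂ q₂' hpath (by simpa using Nat.le_of_succ_le_succ hlen)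
      exact ⟨w, hw₁, by rw [hw₂, Quiver.Path.comp_cons, hhom]⟩

lemma aux_deltaF_step (d m : ℕ) : deltaF d (m + 2) = deltaF d m + d := by
  rcases Nat.even_or_odd m with ⟨t, ht⟩ | ⟨t, ht⟩
  · subst ht
    have h1 : (t + t) % 2 = 0 := by omega
    have h2 : (t + t + 2) % 2 = 0 := by omega
    have h3 : (t + t) / 2 = t := by omega
    have h4 : (t + t + 2) / 2 = t + 1 := by omega
    simp [deltaF, h1, h2, h3, h4, Nat.add_mul]
  · subst ht
    have h1 : ¬ (2 * t + 1) % 2 = 0 := by omega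
    have h2 : ¬ (2 * t + 1 + 2) % 2 = 0 := by omega
    have h3 : (2 * t + 1 - 1) / 2 = t := by omega
    have h4 : (2 * t + 1 + 2 - 1) / 2 = t + 1 := by omega
    rw [deltaF, deltaF, if_neg h2, if_neg h1, h3, h4, Nat.add_mul]
    omega

/-- for a `d`-covering set `ρ` of paths of length `d` such that every
element of `R^m` has length `δ(m)` for `m ≥ 2`, every subpath of length `d` of an
element of `R^n` (`n ≥ 2`) belongs to `ρ`. -/
theorem stmt_0 {V : Type u} [Quiver.{v + 1} V] [Fintype V] [∀ a b : V, Fintype (a ⟶ b)]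
    (d : ℕ) (hd : 2 ≤ d) (ρ : PathSet V)
    (hρlen : ∀ ⦃a b : V⦄ (p : Quiver.Path a b), ρ p → p.length = d)
    (hcov : DCovering d ρ)
    (hRlen : ∀ m, 2 ≤ m → ∀ ⦃a b : V⦄ (p : Quiver.Path a b), RSet ρ m p →
      p.length = deltaF d m) :
    ∀ n, 2 ≤ n → ∀ ⦃a b : V⦄ (R : Quiver.Path a b), RSet ρ n R →
      ∀ ⦃x y : V⦄ (s : Quiver.Path x y), s.length = d → IsSubpathP s R → ρ s := by
  intro n hn
  induction n, hn using Nat.le_induction with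
  | base =>
    intro a b R hR x y s hs hsub
    obtain ⟨U, W, hUW⟩ := hsub
    have hR2 : R.length = d := hρlen R hR
    have hL := congrArg Quiver.Path.length hUW
    simp only [Quiver.Path.length_comp, hs, hR2] at hL
    exact aux_pred_of_trivial_ends ρ (by omega) (by omega) (hUW ▸ hR)
  | succ n hn ih =>
    intro a b R hRfull x y s hs hsub
    obtain ⟨k, rfl⟩ : ∃ k, n = k + 2 := ⟨n - 2, by omega⟩
    have hlR : R.length = deltaF d (k + 3) := hRlen (k + 3) (by omega) R hRfull
    obtain ⟨c, Rp, u, hRp, rfl, b', Rpp, p, hRpp, hRpeq, ⟨x₀, q, hqρ, hov⟩, -⟩ := hRfull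
    -- lengths
    have hlq : q.length = d := hρlen q hqρ
    have hlRp : Rp.length = deltaF d (k + 2) := hRlen (k + 2) (by omega) Rp hRp
    have hlRpp : Rpp.length = deltaF d (k + 1) := by
      match k, hRpp with
      | 0, h => simpa [deltaF, RSet] using h
      | (k' + 1), h => exact hRlen (k' + 2) (by omega) _ h
    have hstep1 : deltaF d (k + 3) = deltaF d (k + 1) + d := aux_deltaF_step d (k + 1)
    have hstep0 : deltaF d (k + 2) = deltaF d k + d := aux_deltaF_step d k
    have hlu : Rp.length + u.length = deltaF d (k + 3) := by
      have := congrArg Quiver.Path.length (rfl : Rp.comp u = Rp.comp u)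
      simpa [Quiver.Path.length_comp] using hlR
    have hlp : Rpp.length + p.length = deltaF d (k + 2) := by
      have := congrArg Quiver.Path.length hRpeq
      simpa [Quiver.Path.length_comp, hlRp] using this.symm
    have hpu : p.length + u.length = d := by omega
    obtain ⟨v, hveq, hu1, hud⟩ := hov
    have hulq : u.length < d := by omega
    have hp1 : 1 ≤ p.length := by omega
    -- v is trivial, so p.comp u = q ∈ ρ
    have hlv : v.length = 0 := by
      have := congrArg Quiver.Path.length hveq
      simp only [Quiver.Path.length_comp, hlq] at this
      omega
    have hρpu : ρ (p.comp u) := by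
      cases v with
      | nil => rw [show p.comp u = q by simpa using hveq]; exact hqρ
      | cons _ _ => simp at hlv
    -- split Rpp = P.comp a₀ with a₀.length = u.length
    have huRpp : u.length ≤ Rpp.length := by omega
    obtain ⟨c₀, P, a₀, hPsplit, hla₀⟩ := aux_suffix_split Rpp u.length huRpp
    have hρa₀p : ρ (a₀.comp p) := by
      refine ih _ hRp (a₀.comp p) (by simp [Quiver.Path.length_comp]; omega) ⟨P, .nil, ?_⟩
      rw [hRpeq, hPsplit]
      simp [Quiver.Path.comp_assoc]
    obtain ⟨U, W, hUW⟩ := hsub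
    by_cases hcase : u.length ≤ W.length
    · -- s is a subpath of Rp
      obtain ⟨w, hw₁, _⟩ := aux_comp_eq_comp Rp u (U.comp s) W hUW hcase
      exact ih _ hRp s hs ⟨U, w, hw₁⟩
    · -- s overlaps u: use the covering property on a₀.comp p.comp u
      push_neg at hcase
      have hR1 : U.comp (s.comp W) = P.comp ((a₀.comp p).comp u) := by
        rw [← Quiver.Path.comp_assoc, ← hUW, hRpeq, hPsplit]
        simp [Quiver.Path.comp_assoc]
      have hlen1 : (s.comp W).length ≤ ((a₀.comp p).comp u).length := by
        simp only [Quiver.Path.length_comp, hs]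
        omega
      obtain ⟨w, _, hw₂⟩ := aux_comp_eq_comp U (s.comp W) P ((a₀.comp p).comp u) hR1 hlen1
      refine hcov a₀ p u hρa₀p hρpu hp1 s hs ⟨w, W, ?_⟩
      rw [hw₂, Quiver.Path.comp_assoc]
end

section
/- Let Q be a finite quiver, let d ≥ 2, and let ρ be a d-covering set of paths of Q, each of length d. Let T = α_1⋯α_n be a closed trail in Q with d ≥ n+1, and suppose that some element of ρ lies on T (as is automatic when the monomial algebra KQ/(ρ) is finite dimensional). Then every path of length d that lies on the closed trail T belongs to ρ. -/
open Quiver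

universe u v

variable {V : Type u} [Quiver.{v + 1} V]

section AuxStmt1

variable {V : Type u} [Quiver.{v + 1} V]

/-- `m`-fold repetition of a list. -/
def repL {α : Type*} (l : List α) : ℕ → List α
  | 0 => []
  | m + 1 => repL l m ++ l

theorem repL_succ' {α : Type*} (l : List α) (m : ℕ) : repL l (m + 1) = l ++ repL l m := by
  induction m with
  | zero => simp [repL]
  | succ k ih =>
    show repL l (k + 1) ++ l = l ++ (repL l k ++ l)
    rw [ih]; simp [List.append_assoc]

theorem length_repL {α : Type*} (l : List α) (m : ℕ) : (repL l m).length = m * l.length := by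
  induction m with
  | zero => simp [repL]
  | succ k ih => simp [repL, ih, Nat.succ_mul]

theorem repL_add {α : Type*} (l : List α) (a b : ℕ) :
    repL l (a + b) = repL l a ++ repL l b := by
  induction b with
  | zero => simp [repL]
  | succ k ih =>
    show repL l (a + k) ++ l = repL l a ++ (repL l k ++ l)
    rw [ih]; simp [List.append_assoc]

theorem drop_repL {α : Type*} (l : List α) (k : ℕ) :
    ∀ (M i : ℕ), (repL l (M + k)).drop (i + k * l.length) = (repL l M).drop i := by
  induction k with
  | zero => intro M i; simp
  | succ k ih =>
    intro M i
    have h1 : repL l (M + (k + 1)) = l ++ repL l (M + k) := by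
      rw [show M + (k + 1) = (M + k) + 1 from rfl, repL_succ']
    rw [h1, show i + (k + 1) * l.length = l.length + (i + k * l.length) by ring,
      List.drop_length_add_append, ih]

theorem take_drop_repL {α : Type*} (l : List α) {M M' i len : ℕ} (hMM : M ≤ M')
    (h : i + len ≤ M * l.length) :
    ((repL l M').drop i).take len = ((repL l M).drop i).take len := by
  obtain ⟨t, rfl⟩ := Nat.exists_eq_add_of_le hMM
  rw [repL_add, List.drop_append_of_le_length (by rw [length_repL]; omega),
    List.take_append_of_le_length (by rw [List.length_drop, length_repL]; omega)]

theorem window_repL {α : Type*} (l : List α) {i₁ i₂ len M₁ M₂ : ℕ}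
    (hmod : i₁ % l.length = i₂ % l.length)
    (h₁ : i₁ + len ≤ M₁ * l.length) (h₂ : i₂ + len ≤ M₂ * l.length) :
    ((repL l M₁).drop i₁).take len = ((repL l M₂).drop i₂).take len := by
  rcases Nat.eq_zero_or_pos l.length with h0 | hpos
  · have hlen0 : len = 0 := by rw [h0] at h₁; omega
    simp [hlen0]
  · have key : ∀ (i Mi : ℕ), i + len ≤ Mi * l.length →
        ((repL l Mi).drop i).take len =
          ((repL l (len + 1)).drop (i % l.length)).take len := by
      intro i Mi hb
      obtain ⟨jj, hjj⟩ : ∃ jj, jj = i / l.length := ⟨_, rfl⟩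
      obtain ⟨rr, hrr⟩ : ∃ rr, rr = i % l.length := ⟨_, rfl⟩
      have hi : i = rr + jj * l.length := by rw [hjj, hrr, Nat.mod_add_div']
      have hrlt : rr < l.length := by rw [hrr]; exact Nat.mod_lt _ hpos
      have hjle : jj ≤ Mi := by
        rw [hjj]
        have h' : i ≤ Mi * l.length := by omega
        calc i / l.length ≤ Mi * l.length / l.length := Nat.div_le_div_right h'
          _ = Mi := Nat.mul_div_cancel Mi hpos
      have hred : ((repL l Mi).drop i).take len =
          ((repL l (Mi - jj)).drop rr).take len := by
        conv_lhs => rw [show Mi = (Mi - jj) + jj by omega, hi]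
        rw [drop_repL]
      have hsub : rr + len ≤ (Mi - jj) * l.length := by
        have e1 : (Mi - jj) * l.length = Mi * l.length - jj * l.length := by
          rw [Nat.sub_mul]
        have e2 : jj * l.length ≤ Mi * l.length := Nat.mul_le_mul_right _ hjle
        omega
      have hcan : rr + len ≤ (len + 1) * l.length := by
        have e3 : (len + 1) * l.length = len * l.length + l.length := by ring
        have e4 : len ≤ len * l.length := Nat.le_mul_of_pos_right len hpos
        omega
      rw [hred, ← hrr]
      rcases le_total (Mi - jj) (len + 1) with hle | hle
      · exact (take_drop_repL l hle hsub).symm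
      · exact take_drop_repL l hle hcan
    rw [key i₁ M₁ h₁, key i₂ M₂ h₂, hmod]

theorem arrowList_comp {a b c : V} (p : Quiver.Path a b) (q : Quiver.Path b c) :
    arrowList (p.comp q) = arrowList p ++ arrowList q := by
  induction q with
  | nil => simp [arrowList]
  | cons q e ih => simp [arrowList, ih]

theorem length_arrowList {a b : V} (p : Quiver.Path a b) :
    (arrowList p).length = p.length := by
  induction p with
  | nil => simp [arrowList]
  | cons p e ih => simp [arrowList, ih]

theorem arrowList_cpow {a : V} (T : Quiver.Path a a) (m : ℕ) :
    arrowList (cpow T m) = repL (arrowList T) m := by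
  induction m with
  | zero => rfl
  | succ k ih => simp [cpow, repL, arrowList_comp, ih]

theorem cpow_length {a : V} (T : Quiver.Path a a) (m : ℕ) :
    (cpow T m).length = m * T.length := by
  rw [← length_arrowList, arrowList_cpow, length_repL, length_arrowList]

theorem path_splitAt {a b : V} (W : Quiver.Path a b) (k : ℕ) (hk : k ≤ W.length) :
    ∃ (c : V) (u : Quiver.Path a c) (s : Quiver.Path c b),
      W = u.comp s ∧ u.length = k := by
  induction W with
  | nil =>
    refine ⟨a, .nil, .nil, rfl, ?_⟩
    simp only [Quiver.Path.length_nil] at hk ⊢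
    omega
  | cons p e ih =>
    by_cases hkp : k ≤ p.length
    · obtain ⟨c, u, s, h1, h2⟩ := ih hkp
      exact ⟨c, u, s.cons e, by rw [h1]; rfl, h2⟩
    · refine ⟨_, p.cons e, .nil, rfl, ?_⟩
      simp only [Quiver.Path.length_cons] at hk ⊢
      omega

theorem spath_out {a b c e : V} {p : Quiver.Path a b} {q : Quiver.Path c e}
    (h : (⟨a, b, p⟩ : SPath V) = ⟨c, e, q⟩) (P : PathSet V) (hp : P p) : P q := by
  have h1 : a = c := congrArg (fun z : SPath V => z.1) h
  subst h1
  have h2 : b = e := congrArg (fun z : SPath V => z.2.1) h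
  subst h2
  simp only [Sigma.mk.inj_iff, heq_eq_eq, true_and] at h
  rw [← h]; exact hp

theorem spath_eq_nil {a b : V} (p : Quiver.Path a b) (h : arrowList p = []) :
    (⟨a, b, p⟩ : SPath V) = ⟨a, a, .nil⟩ := by
  cases p with
  | nil => rfl
  | cons p e => simp [arrowList] at h

theorem head_arrowList : ∀ {a b : V} (p : Quiver.Path a b) (x : SArrow V)
    (l : List (SArrow V)), arrowList p = x :: l → x.1 = a := by
  intro a b p
  induction p with
  | nil => intro x l h; simp [arrowList] at h
  | cons p e ih =>
    intro x l h
    simp only [arrowList] at h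
    rcases hl : arrowList p with _ | ⟨y, ys⟩
    · rw [hl] at h
      simp only [List.nil_append] at h
      injection h with hx hl'
      have h2 := spath_eq_nil p hl
      have h6 : _ = _ := congrArg (fun z : SPath V => z.2.1) h2
      rw [← hx]
      exact h6
    · rw [hl] at h
      simp only [List.cons_append] at h
      injection h with hx hl'
      rw [← hx]
      exact ih y ys hl

theorem spath_cons_congr {a m m' b e : V} {p : Quiver.Path a m} {q : Quiver.Path a m'}
    {f : m ⟶ b} {g : m' ⟶ e}
    (h3 : (⟨a, m, p⟩ : SPath V) = ⟨a, m', q⟩)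
    (harr : (⟨m, b, f⟩ : SArrow V) = ⟨m', e, g⟩) :
    (⟨a, b, p.cons f⟩ : SPath V) = ⟨a, e, q.cons g⟩ := by
  have h1 : m = m' := congrArg (fun z : SArrow V => z.1) harr
  subst h1
  have h2 : b = e := congrArg (fun z : SArrow V => z.2.1) harr
  subst h2
  simp only [Sigma.mk.inj_iff, heq_eq_eq, true_and] at h3 harr
  rw [h3, harr]

theorem spath_eq_aux {a : V} : ∀ {b : V} (p : Quiver.Path a b) {e : V}
    (q : Quiver.Path a e), arrowList p = arrowList q →
    (⟨a, b, p⟩ : SPath V) = ⟨a, e, q⟩ := by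
  intro b p
  induction p with
  | nil =>
    intro e q h
    exact (spath_eq_nil q h.symm).symm
  | cons p f ih =>
    intro e q h
    cases q with
    | nil => simp [arrowList] at h
    | cons q g =>
      simp only [arrowList] at h
      obtain ⟨h1, h2⟩ := List.append_inj' h (by simp)
      exact spath_cons_congr (ih q h1) ((List.cons.inj h2).1)

theorem rho_congr (P : PathSet V) {a b : V} (p : Quiver.Path a b) {c e : V}
    (q : Quiver.Path c e) (h : arrowList p = arrowList q) (hlen : 1 ≤ p.length)
    (hp : P p) : P q := by
  obtain ⟨x, l, hx⟩ : ∃ x l, arrowList p = x :: l := by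
    rcases hal : arrowList p with _ | ⟨x, l⟩
    · exfalso
      have hh := length_arrowList p
      rw [hal] at hh
      simp at hh
      omega
    · exact ⟨x, l, rfl⟩
  have ha : x.1 = a := head_arrowList p x l hx
  have hc : x.1 = c := head_arrowList q x l (by rw [← h]; exact hx)
  have hac : a = c := by rw [← ha, hc]
  subst hac
  exact spath_out (spath_eq_aux p q h) P hp

theorem window_eq {a b c e : V} (u : Quiver.Path a b) (q : Quiver.Path b c)
    (v : Quiver.Path c e) {W : Quiver.Path a e} (h : W = (u.comp q).comp v) :
    arrowList q = ((arrowList W).drop u.length).take q.length := by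
  subst h
  rw [arrowList_comp, arrowList_comp, List.append_assoc, ← length_arrowList u,
    List.drop_left, ← length_arrowList q, List.take_left]

end AuxStmt1

/-- if `T` is a closed trail, `d ≥ ℓ(T) + 1`, and some element of `ρ`
lies on `T`, then every path of length `d` lying on `T` belongs to `ρ`. -/
theorem stmt_1 {V : Type u} [Quiver.{v + 1} V] [Fintype V] [∀ a b : V, Fintype (a ⟶ b)]
    (d : ℕ) (hd : 2 ≤ d) (ρ : PathSet V)
    (hρlen : ∀ ⦃a b : V⦄ (p : Quiver.Path a b), ρ p → p.length = d)
    (hcov : DCovering d ρ)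
    {a : V} (T : Quiver.Path a a) (hT : IsClosedTrail T)
    (hdT : T.length + 1 ≤ d)
    (hex : ∃ (x y : V) (q : Quiver.Path x y), ρ q ∧ LiesOn q T) :
    RhoTSub d ρ T := by
  obtain ⟨hn1, -⟩ := hT
  obtain ⟨x₀, y₀, q₀, hq₀, m, hm, u, v, hdec⟩ := hex
  have hq₀d : q₀.length = d := hρlen q₀ hq₀
  have hL : (arrowList T).length = T.length := length_arrowList T
  have hmul : (m + 1) * T.length = m * T.length + T.length := by ring
  have hlen_m : m * T.length = u.length + d + v.length := by
    have hh := congrArg Quiver.Path.length hdec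
    simp only [cpow_length, Quiver.Path.length_comp, hq₀d] at hh
    omega
  obtain ⟨b₁, p, mid, hq₀split, hpn⟩ := path_splitAt q₀ T.length (by omega)
  have hmidlen : mid.length = d - T.length := by
    have hh := congrArg Quiver.Path.length hq₀split
    simp only [Quiver.Path.length_comp, hq₀d, hpn] at hh
    omega
  obtain ⟨b₂, w, v', hvT, hwn⟩ := path_splitAt (v.comp T) T.length
    (by simp only [Quiver.Path.length_comp]; omega)
  have hbig : cpow T (m + 1) = (u.comp ((p.comp mid).comp w)).comp v' := by
    show (cpow T m).comp T = _
    rw [hdec, hq₀split]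
    simp only [Quiver.Path.comp_assoc]
    rw [hvT]
  have hbig' : cpow T (m + 1) = ((u.comp p).comp (mid.comp w)).comp v' := by
    rw [hbig]
    simp only [Quiver.Path.comp_assoc]
  have hq₁list := window_eq (u.comp p) (mid.comp w) v' hbig'
  have hq₀list := window_eq u q₀ v hdec
  have hwq : (mid.comp w).length = d := by
    simp only [Quiver.Path.length_comp, hmidlen, hwn]
    omega
  have hup : (u.comp p).length = u.length + T.length := by
    rw [Quiver.Path.length_comp, hpn]
  have hq₁ : ρ (mid.comp w) := by
    refine rho_congr ρ q₀ (mid.comp w) ?_ (by omega) hq₀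
    rw [hq₀list, hq₁list, hq₀d, hwq, hup, arrowList_cpow, arrowList_cpow]
    exact window_repL (arrowList T) (by rw [hL]; exact (Nat.add_mod_right _ _).symm)
      (by rw [hL]; omega) (by rw [hL, hmul]; omega)
  intro x y q' hq'd hq'lies
  obtain ⟨m', hm', u'', v'', hdec'⟩ := hq'lies
  have hq'list := window_eq u'' q' v'' hdec'
  have hlen_m' : m' * T.length = u''.length + d + v''.length := by
    have hh := congrArg Quiver.Path.length hdec'
    simp only [cpow_length, Quiver.Path.length_comp, hq'd] at hh
    omega
  obtain ⟨k, hkn, hkmod⟩ : ∃ k, k ≤ T.length ∧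
      (u.length + k) % T.length = u''.length % T.length := by
    obtain ⟨c, hc⟩ : ∃ c, u.length = T.length * c + u.length % T.length :=
      ⟨u.length / T.length, by rw [Nat.div_add_mod]⟩
    have h1 : u.length % T.length < T.length := Nat.mod_lt _ (by omega)
    have h2 : u''.length % T.length < T.length := Nat.mod_lt _ (by omega)
    rcases le_total (u.length % T.length) (u''.length % T.length) with hle | hle
    · refine ⟨u''.length % T.length - u.length % T.length, by omega, ?_⟩
      have he : u.length + (u''.length % T.length - u.length % T.length) =
          T.length * c + u''.length % T.length := by omega
      rw [he, Nat.mul_add_mod]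
      exact Nat.mod_eq_of_lt h2
    · refine ⟨T.length + u''.length % T.length - u.length % T.length, by omega, ?_⟩
      have hmc : T.length * (c + 1) = T.length * c + T.length := by ring
      have he : u.length + (T.length + u''.length % T.length - u.length % T.length) =
          T.length * (c + 1) + u''.length % T.length := by omega
      rw [he, Nat.mul_add_mod]
      exact Nat.mod_eq_of_lt h2
  obtain ⟨c₁, u₁, rest, hW1, hu₁⟩ := path_splitAt ((p.comp mid).comp w) k
    (by simp only [Quiver.Path.length_comp]; omega)
  obtain ⟨c₂, s, v₁, hrest, hs⟩ := path_splitAt rest d (by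
    have hh := congrArg Quiver.Path.length hW1
    simp only [Quiver.Path.length_comp, hu₁] at hh
    omega)
  have hWs : (p.comp mid).comp w = (u₁.comp s).comp v₁ := by
    rw [hW1, hrest, Quiver.Path.comp_assoc]
  have hρpm : ρ (p.comp mid) := by rw [← hq₀split]; exact hq₀
  have hρs : ρ s := hcov p mid w hρpm hq₁ (by omega) s hs ⟨u₁, v₁, hWs⟩
  have hbig2 : cpow T (m + 1) = ((u.comp u₁).comp s).comp (v₁.comp v') := by
    rw [hbig, hW1, hrest]
    simp only [Quiver.Path.comp_assoc]
  have hslist := window_eq (u.comp u₁) s (v₁.comp v') hbig2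
  refine rho_congr ρ s q' ?_ (by omega) hρs
  rw [hslist, hq'list, hs, hq'd, arrowList_cpow, arrowList_cpow,
    Quiver.Path.length_comp, hu₁]
  exact window_repL (arrowList T) (by rw [hL]; exact hkmod)
    (by rw [hL, hmul]; omega) (by rw [hL]; omega)
end

section
/- Let Q be a finite quiver, let d ≥ 2, and let ρ be a d-covering set of paths of Q, each of length d, such that every closed trail of Q has some element of ρ lying on it (as is automatic when the monomial algebra KQ/(ρ) is finite dimensional). Let T = α_1⋯α_n be a closed trail with n ≥ 2 and ρ_T ⊆ ρ, such that (i) no α_i is a loop and (ii) no subcycle q of T of length at least 2 satisfies ρ_q ⊆ ρ. If p is a path of length d all of whose arrows belong to {α_1,…,α_n} and p does not lie on T, then p ∉ ρ. -/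
open Quiver

universe u v

variable {V : Type u} [Quiver.{v + 1} V]

namespace S2

abbrev sp {x y : V} (p : Quiver.Path x y) : SPath V := ⟨x, y, p⟩
abbrev sa {x y : V} (e : x ⟶ y) : SArrow V := ⟨x, y, e⟩

lemma sp_inj {x y x' y' : V} {p : Quiver.Path x y} {p' : Quiver.Path x' y'}
    (h : sp p = sp p') : ∃ (_ : x = x') (_ : y = y'), HEq p p' := by
  injection h with h1 h2
  subst h1
  have h2' := eq_of_heq h2
  injection h2' with h3 h4
  subst h3
  exact ⟨rfl, rfl, h4⟩

lemma sa_inj {x y x' y' : V} {e : x ⟶ y} {e' : x' ⟶ y'}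
    (h : sa e = sa e') : ∃ (_ : x = x') (_ : y = y'), HEq e e' := by
  injection h with h1 h2
  subst h1
  have h2' := eq_of_heq h2
  injection h2' with h3 h4
  subst h3
  exact ⟨rfl, rfl, h4⟩

lemma eq_of_sp {x y : V} {p q : Quiver.Path x y} (h : sp p = sp q) : p = q := by
  obtain ⟨_, _, h3⟩ := sp_inj h
  exact eq_of_heq h3

lemma sp_comp_congr {a b c a' b' c' : V} {p : Quiver.Path a b} {q : Quiver.Path b c}
    {p' : Quiver.Path a' b'} {q' : Quiver.Path b' c'}
    (h1 : sp p = sp p') (h2 : sp q = sp q') : sp (p.comp q) = sp (p'.comp q') := by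
  obtain ⟨rfl, rfl, hp⟩ := sp_inj h1
  obtain ⟨-, rfl, hq⟩ := sp_inj h2
  rw [eq_of_heq hp, eq_of_heq hq]

lemma sp_cons_congr {a b c a' b' c' : V} {p : Quiver.Path a b} {e : b ⟶ c}
    {p' : Quiver.Path a' b'} {e' : b' ⟶ c'}
    (h1 : sp p = sp p') (h2 : sa e = sa e') : sp (p.cons e) = sp (p'.cons e') := by
  obtain ⟨rfl, rfl, hp⟩ := sp_inj h1
  obtain ⟨-, rfl, he⟩ := sa_inj h2
  rw [eq_of_heq hp, eq_of_heq he]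

lemma sp_cons_inj {a b c a' b' c' : V} {p : Quiver.Path a b} {e : b ⟶ c}
    {p' : Quiver.Path a' b'} {e' : b' ⟶ c'}
    (h : sp (p.cons e) = sp (p'.cons e')) : sp p = sp p' ∧ sa e = sa e' := by
  obtain ⟨rfl, rfl, hp⟩ := sp_inj h
  have hp' := eq_of_heq hp
  obtain rfl := Quiver.Path.obj_eq_of_cons_eq_cons hp'
  rw [eq_of_heq (Quiver.Path.heq_of_cons_eq_cons hp'),
    eq_of_heq (Quiver.Path.hom_heq_of_cons_eq_cons hp')]
  exact ⟨rfl, rfl⟩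

lemma sp_length {x y x' y' : V} {p : Quiver.Path x y} {p' : Quiver.Path x' y'}
    (h : sp p = sp p') : p.length = p'.length := by
  obtain ⟨rfl, rfl, hp⟩ := sp_inj h
  rw [eq_of_heq hp]

lemma sp_nil_congr {x y : V} (h : x = y) :
    sp (Quiver.Path.nil (a := x)) = sp (Quiver.Path.nil (a := y)) := by subst h; rfl

lemma sp_of_length_zero {x y : V} (p : Quiver.Path x y) (h : p.length = 0) :
    sp p = sp (Quiver.Path.nil (a := x)) := by
  cases p with
  | nil => rfl
  | cons p e => simp [Quiver.Path.length] at h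

/-- recast a path along endpoint equalities -/
def recastP {x x' y y' : V} : x = x' → y = y' → Quiver.Path x y → Quiver.Path x' y'
  | rfl, rfl, p => p

lemma sp_recastP {x x' y y' : V} (h1 : x = x') (h2 : y = y') (p : Quiver.Path x y) :
    sp (recastP h1 h2 p) = sp p := by
  subst h1; subst h2; rfl

def recastA {x x' y y' : V} : x = x' → y = y' → (x ⟶ y) → (x' ⟶ y')
  | rfl, rfl, e => e

lemma sa_recastA {x x' y y' : V} (h1 : x = x') (h2 : y = y') (e : x ⟶ y) :
    sa (recastA h1 h2 e) = sa e := by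
  subst h1; subst h2; rfl

lemma comp_toPath {a b c : V} (p : Quiver.Path a b) (e : b ⟶ c) :
    p.comp e.toPath = p.cons e := by
  simp [Quiver.Hom.toPath]

end S2
namespace S2

structure QStream (V : Type u) [Quiver.{v + 1} V] where
  vtx : ℕ → V
  arr : ∀ t, vtx t ⟶ vtx (t + 1)

def QStream.win (S : QStream V) (s : ℕ) : (len : ℕ) → Quiver.Path (S.vtx s) (S.vtx (s + len))
  | 0 => Quiver.Path.nil
  | (l + 1) => (S.win s l).cons (S.arr (s + l))

@[simp] lemma win_length (S : QStream V) (s : ℕ) : ∀ l, (S.win s l).length = l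
  | 0 => rfl
  | (l + 1) => congrArg Nat.succ (win_length S s l)

lemma win_congr (S : QStream V) {s s' l l' : ℕ} (h1 : s = s') (h2 : l = l') :
    sp (S.win s l) = sp (S.win s' l') := by subst h1; subst h2; rfl

lemma sa_arr_congr (S : QStream V) {t t' : ℕ} (h : t = t') :
    sa (S.arr t) = sa (S.arr t') := by subst h; rfl

lemma win_add (S : QStream V) (s l1 : ℕ) :
    ∀ l2, sp (S.win s (l1 + l2)) = sp ((S.win s l1).comp (S.win (s + l1) l2))
  | 0 => by
    show sp (S.win s l1) = sp ((S.win s l1).comp Quiver.Path.nil)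
    rw [Quiver.Path.comp_nil]
  | (l2 + 1) => by
    show sp ((S.win s (l1 + l2)).cons (S.arr (s + (l1 + l2)))) =
      sp ((S.win s l1).comp ((S.win (s + l1) l2).cons (S.arr (s + l1 + l2))))
    rw [Quiver.Path.comp_cons]
    exact sp_cons_congr (win_add S s l1 l2) (sa_arr_congr S (by omega))

lemma win_agree (S1 S2 : QStream V) (s1 s2 : ℕ) :
    ∀ len, (∀ r, r ≤ len → S1.vtx (s1 + r) = S2.vtx (s2 + r)) →
    (∀ r, r < len → sa (S1.arr (s1 + r)) = sa (S2.arr (s2 + r))) →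
    sp (S1.win s1 len) = sp (S2.win s2 len)
  | 0, hv, _ => by
    have := hv 0 (Nat.zero_le 0)
    exact sp_nil_congr this
  | (len + 1), hv, ha =>
    sp_cons_congr
      (win_agree S1 S2 s1 s2 len (fun r hr => hv r (by omega)) (fun r hr => ha r (by omega)))
      (ha len (by omega))

lemma win_extract (S1 S2 : QStream V) (s1 s2 : ℕ) :
    ∀ len, sp (S1.win s1 len) = sp (S2.win s2 len) →
      (∀ r, r ≤ len → S1.vtx (s1 + r) = S2.vtx (s2 + r)) ∧
      (∀ r, r < len → sa (S1.arr (s1 + r)) = sa (S2.arr (s2 + r)))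
  | 0, h => by
    obtain ⟨h1, -, -⟩ := sp_inj h
    constructor
    · intro r hr; interval_cases r; simpa using h1
    · intro r hr; omega
  | (len + 1), h => by
    obtain ⟨hp, he⟩ := sp_cons_inj (h : sp ((S1.win s1 len).cons _) = sp ((S2.win s2 len).cons _))
    obtain ⟨ih1, ih2⟩ := win_extract S1 S2 s1 s2 len hp
    constructor
    · intro r hr
      rcases Nat.lt_or_ge r (len + 1) with h' | h'
      · exact ih1 r (by omega)
      · have hr' : r = len + 1 := by omega
        subst hr'
        obtain ⟨-, h2, -⟩ := sa_inj he
        have e1 : s1 + (len + 1) = s1 + len + 1 := by omega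
        have e2 : s2 + (len + 1) = s2 + len + 1 := by omega
        rw [e1, e2]
        exact h2
    · intro r hr
      rcases Nat.lt_or_ge r len with h' | h'
      · exact ih2 r h'
      · have hr' : r = len := by omega
        subst hr'
        exact he

lemma comp_inj_sig {a c : V} : ∀ {b b' : V} (q : Quiver.Path b c) (q' : Quiver.Path b' c)
    (u : Quiver.Path a b) (u' : Quiver.Path a b'),
    u.comp q = u'.comp q' → q.length = q'.length → sp u = sp u' ∧ sp q = sp q'
  | _, _, Quiver.Path.nil, q', u, u', h, hl => by
    have h0 : sp q' = sp (Quiver.Path.nil (a := _)) := sp_of_length_zero q' (by simpa using hl.symm)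
    obtain ⟨-, rfl, hq⟩ := sp_inj h0
    rw [eq_of_heq hq] at h ⊢
    simp only [Quiver.Path.comp_nil] at h
    exact ⟨by rw [h], rfl⟩
  | _, _, Quiver.Path.cons q e, q', u, u', h, hl => by
    cases q' with
    | nil => simp [Quiver.Path.length] at hl
    | cons q' e' =>
      rw [Quiver.Path.comp_cons, Quiver.Path.comp_cons] at h
      obtain rfl := Quiver.Path.obj_eq_of_cons_eq_cons h
      have he := eq_of_heq (Quiver.Path.hom_heq_of_cons_eq_cons h)
      have hq := eq_of_heq (Quiver.Path.heq_of_cons_eq_cons h)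
      obtain ⟨h1, h2⟩ := comp_inj_sig q q' u u' hq (by simpa [Quiver.Path.length] using hl)
      exact ⟨h1, sp_cons_congr h2 (by rw [he])⟩

lemma comp_cancel_sp {a b c b' c' : V} {u : Quiver.Path a b} {q : Quiver.Path b c}
    {u' : Quiver.Path a b'} {q' : Quiver.Path b' c'}
    (h : sp (u.comp q) = sp (u'.comp q')) (hl : q.length = q'.length) :
    sp u = sp u' ∧ sp q = sp q' := by
  obtain ⟨-, rfl, hh⟩ := sp_inj h
  exact comp_inj_sig q q' u u' (eq_of_heq hh) hl

lemma subwin (S : QStream V) (s L : ℕ) {x y : V} (q : Quiver.Path x y)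
    (h : IsSubpathP q (S.win s L)) : ∃ t, s ≤ t ∧ t + q.length ≤ s + L ∧
      sp q = sp (S.win t q.length) := by
  obtain ⟨u, w, hw⟩ := h
  have hL : L = u.length + q.length + w.length := by
    have hl := win_length S s L
    rw [hw] at hl
    simp [Quiver.Path.length_comp] at hl
    omega
  set W1 := S.win s u.length with hW1
  set W2 := S.win (s + u.length) q.length with hW2
  have hcast : s + u.length + q.length + w.length = s + L := by omega
  set W3 : Quiver.Path (S.vtx (s + u.length + q.length)) (S.vtx (s + L)) :=
    recastP rfl (congrArg S.vtx hcast) (S.win (s + u.length + q.length) w.length) with hW3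
  have hsplit : S.win s L = (W1.comp W2).comp W3 := by
    apply eq_of_sp
    refine (win_congr S rfl hL).trans ?_
    refine (win_add S s (u.length + q.length) w.length).trans ?_
    refine (sp_comp_congr (win_add S s u.length q.length) (win_congr S (by omega) rfl)).trans ?_
    exact (sp_comp_congr rfl (sp_recastP _ _ _)).symm
  rw [hsplit] at hw
  have hW3len : w.length = W3.length := by
    rw [hW3, sp_length (sp_recastP rfl (congrArg S.vtx hcast) _), win_length]
  obtain ⟨h12, -⟩ := comp_cancel_sp (congrArg _ hw.symm) hW3len
  have hqlen : q.length = W2.length := by rw [hW2, win_length]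
  obtain ⟨-, h2⟩ := comp_cancel_sp h12 hqlen
  exact ⟨s + u.length, by omega, by omega, h2⟩

end S2
namespace S2

lemma mod_succ (n t : ℕ) (h : 1 ≤ n) :
    ((t + 1) % n = t % n + 1 ∧ t % n + 1 < n) ∨ ((t + 1) % n = 0 ∧ t % n = n - 1) := by
  have hd := Nat.div_add_mod t n
  have hm : t % n < n := Nat.mod_lt _ (by omega)
  rcases Nat.lt_or_ge (t % n + 1) n with h' | h'
  · left
    refine ⟨?_, h'⟩
    rw [show t + 1 = t % n + 1 + n * (t / n) by omega, Nat.add_mul_mod_self_left,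
      Nat.mod_eq_of_lt h']
  · right
    have : t % n = n - 1 := by omega
    refine ⟨?_, this⟩
    rw [show t + 1 = 0 + n * (t / n + 1) by rw [Nat.mul_add, Nat.mul_one]; omega,
      Nat.add_mul_mod_self_left]
    exact Nat.zero_mod n

/-- peel the last arrow; restart from `P` when empty -/
def peelStep (a : V) (P : Quiver.Path a a) : (Σ b : V, Quiver.Path a b) → Σ b : V, Quiver.Path a b
  | ⟨_, Quiver.Path.cons p _⟩ => ⟨_, p⟩
  | ⟨_, Quiver.Path.nil⟩ =>
    match P with
    | Quiver.Path.cons p _ => ⟨_, p⟩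
    | Quiver.Path.nil => ⟨a, Quiver.Path.nil⟩

def gfun (a : V) (P : Quiver.Path a a) : ℕ → Σ b : V, Quiver.Path a b
  | 0 => ⟨a, P⟩
  | (k + 1) => peelStep a P (gfun a P k)

lemma glen (a : V) (P : Quiver.Path a a) :
    ∀ k, k ≤ P.length → (gfun a P k).2.length = P.length - k
  | 0, _ => by simp [gfun]
  | (k + 1), hk => by
    have ih := glen a P k (by omega)
    rcases hg : gfun a P k with ⟨b, pp⟩
    rw [hg] at ih
    cases pp with
    | nil => simp at ih; omega
    | cons p e =>
      show (peelStep a P (gfun a P k)).2.length = _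
      rw [hg]
      show p.length = P.length - (k + 1)
      simp [Quiver.Path.length] at ih
      omega

lemma path_cons_of_length_pos {x y : V} (p : Quiver.Path x y) (h : 1 ≤ p.length) :
    ∃ (z : V) (p' : Quiver.Path x z) (e : z ⟶ y), p = p'.cons e := by
  cases p with
  | nil => simp [Quiver.Path.length] at h
  | cons p' e => exact ⟨_, p', e, rfl⟩

lemma gstep (a : V) (P : Quiver.Path a a) (k : ℕ) (hk : k < P.length) :
    ∃ e : (gfun a P (k + 1)).1 ⟶ (gfun a P k).1,
      (gfun a P k).2 = ((gfun a P (k + 1)).2).cons e := by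
  have hlen : 1 ≤ (gfun a P k).2.length := by rw [glen a P k (by omega)]; omega
  obtain ⟨z, p', e, hpe⟩ := path_cons_of_length_pos (gfun a P k).2 hlen
  have hstate : gfun a P k = ⟨(gfun a P k).1, p'.cons e⟩ := by
    rw [← hpe]
  have hnext : gfun a P (k + 1) = ⟨z, p'⟩ := by
    show peelStep a P (gfun a P k) = _
    rw [hstate]
    rfl
  have hz : (gfun a P (k + 1)).1 = z := congrArg Sigma.fst hnext
  have hsp : sp (gfun a P (k + 1)).2 = sp p' := by
    rcases hnext2 : gfun a P (k + 1) with ⟨w, q⟩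
    rw [hnext2] at hnext
    injection hnext with hw hq
    subst hw
    rw [eq_of_heq hq]
  refine ⟨recastA hz.symm rfl e, eq_of_sp ?_⟩
  rw [hpe]
  exact (sp_cons_congr hsp (sa_recastA hz.symm rfl e)).symm

lemma gtop (a : V) (P : Quiver.Path a a) : (gfun a P P.length).1 = a := by
  have h0 := sp_of_length_zero (gfun a P P.length).2 (by rw [glen a P P.length le_rfl]; omega)
  obtain ⟨-, h2, -⟩ := sp_inj h0
  exact h2

lemma vtx_succ (a : V) (P : Quiver.Path a a) (h1 : 1 ≤ P.length) (t : ℕ) :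
    (gfun a P (P.length - t % P.length - 1)).1 = (gfun a P (P.length - (t + 1) % P.length)).1 := by
  rcases mod_succ P.length t h1 with ⟨he, hlt⟩ | ⟨he, heq⟩
  · rw [he, show P.length - (t % P.length + 1) = P.length - t % P.length - 1 from by omega]
  · have h2 : P.length - t % P.length - 1 = 0 := by omega
    have h3 : P.length - (t + 1) % P.length = P.length := by rw [he]; omega
    rw [h2, h3]
    exact (gtop a P).symm ▸ rfl

noncomputable def streamOf (a : V) (P : Quiver.Path a a) (h1 : 1 ≤ P.length) : QStream V where
  vtx t := (gfun a P (P.length - t % P.length)).1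
  arr t :=
    recastA
      (by
        have h2 : t % P.length < P.length := Nat.mod_lt _ (by omega)
        have h3 : P.length - t % P.length - 1 + 1 = P.length - t % P.length := by omega
        rw [h3])
      (vtx_succ a P h1 t)
      (gstep a P (P.length - t % P.length - 1)
        (by
          have h2 : t % P.length < P.length := Nat.mod_lt _ (by omega)
          omega)).choose

end S2
namespace S2

lemma subpath_congr_right {A B A' B' x y : V} {q : Quiver.Path x y}
    {Pb : Quiver.Path A B} {Pb' : Quiver.Path A' B'}
    (h : sp Pb = sp Pb') (hs : IsSubpathP q Pb) : IsSubpathP q Pb' := by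
  obtain ⟨rfl, rfl, hh⟩ := sp_inj h
  rwa [← eq_of_heq hh]

lemma subpath_congr_left {A B x y x' y' : V} {q : Quiver.Path x y} {q' : Quiver.Path x' y'}
    {Pb : Quiver.Path A B} (h : sp q = sp q') (hs : IsSubpathP q Pb) : IsSubpathP q' Pb := by
  obtain ⟨rfl, rfl, hh⟩ := sp_inj h
  rwa [← eq_of_heq hh]

/-- a window is a subpath of a bigger window -/
lemma win_subpath (S : QStream V) (s L t l : ℕ) (hst : s ≤ t) (hend : t + l ≤ s + L) :
    IsSubpathP (S.win t l) (S.win s L) := by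
  refine ⟨recastP rfl (congrArg S.vtx (by omega : s + (t - s) = t)) (S.win s (t - s)),
    recastP rfl (congrArg S.vtx (by omega : t + l + (s + L - (t + l)) = s + L))
      (S.win (t + l) (s + L - (t + l))), ?_⟩
  apply eq_of_sp
  refine (win_congr S rfl (by omega : L = (t - s) + (l + (s + L - (t + l))))).trans ?_
  refine (win_add S s (t - s) (l + (s + L - (t + l)))).trans ?_
  refine (sp_comp_congr (sp_recastP _ _ _).symm ?_).trans
    (congrArg sp (Quiver.Path.comp_assoc _ _ _).symm)
  refine (win_congr S (show s + (t - s) = t by omega) rfl).trans ?_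
  refine (win_add S t l (s + L - (t + l))).trans ?_
  exact sp_comp_congr rfl (sp_recastP _ _ _).symm

lemma so_vtx_mod (a : V) (P : Quiver.Path a a) (h1 : 1 ≤ P.length) {t t' : ℕ}
    (h : t % P.length = t' % P.length) :
    (streamOf a P h1).vtx t = (streamOf a P h1).vtx t' := by
  show (gfun a P (P.length - t % P.length)).1 = (gfun a P (P.length - t' % P.length)).1
  rw [h]

lemma so_vtx0 (a : V) (P : Quiver.Path a a) (h1 : 1 ≤ P.length) :
    (streamOf a P h1).vtx 0 = a := by
  show (gfun a P (P.length - 0 % P.length)).1 = a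
  rw [Nat.zero_mod, Nat.sub_zero, gtop]

lemma so_pf (a : V) (P : Quiver.Path a a) (h1 : 1 ≤ P.length) (t : ℕ) :
    P.length - t % P.length - 1 < P.length := by
  have := Nat.mod_lt t (show 0 < P.length by omega)
  omega

lemma so_arr_canon (a : V) (P : Quiver.Path a a) (h1 : 1 ≤ P.length) (t : ℕ) :
    sa ((streamOf a P h1).arr t) =
      sa ((gstep a P (P.length - t % P.length - 1) (so_pf a P h1 t)).choose) :=
  sa_recastA _ _ _

lemma gstep_choose_congr (a : V) (P : Quiver.Path a a) {j j' : ℕ}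
    (hj : j < P.length) (hj' : j' < P.length) (h : j = j') :
    sa ((gstep a P j hj).choose) = sa ((gstep a P j' hj').choose) := by
  subst h; rfl

lemma so_arr_mod (a : V) (P : Quiver.Path a a) (h1 : 1 ≤ P.length) {t t' : ℕ}
    (h : t % P.length = t' % P.length) :
    sa ((streamOf a P h1).arr t) = sa ((streamOf a P h1).arr t') := by
  rw [so_arr_canon, so_arr_canon]
  exact gstep_choose_congr a P (so_pf a P h1 t) (so_pf a P h1 t') (by rw [h])

lemma so_win_mod (a : V) (P : Quiver.Path a a) (h1 : 1 ≤ P.length) {s s' : ℕ}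
    (h : s % P.length = s' % P.length) (l : ℕ) :
    sp ((streamOf a P h1).win s l) = sp ((streamOf a P h1).win s' l) := by
  apply win_agree
  · intro r _
    exact so_vtx_mod a P h1 (by rw [Nat.add_mod, h, ← Nat.add_mod])
  · intro r _
    exact so_arr_mod a P h1 (by rw [Nat.add_mod, h, ← Nat.add_mod])

lemma so_win_eq (a : V) (P : Quiver.Path a a) (h1 : 1 ≤ P.length) : ∀ k, k ≤ P.length →
    sp ((streamOf a P h1).win 0 k) = sp ((gfun a P (P.length - k)).2)
  | 0, _ => by
    have e0 := sp_of_length_zero (gfun a P (P.length - 0)).2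
      (by rw [glen a P _ (by omega)]; omega)
    exact (sp_nil_congr (so_vtx0 a P h1)).trans e0.symm
  | (k + 1), hk => by
    have hkn : k < P.length := by omega
    have ih := so_win_eq a P h1 k (by omega)
    show sp (((streamOf a P h1).win 0 k).cons ((streamOf a P h1).arr (0 + k))) = _
    have hkpf : P.length - k - 1 < P.length := by omega
    have harr : sa ((streamOf a P h1).arr (0 + k)) =
        sa ((gstep a P (P.length - k - 1) hkpf).choose) := by
      rw [so_arr_canon]
      refine gstep_choose_congr a P (so_pf a P h1 (0 + k)) hkpf ?_
      rw [Nat.zero_add, Nat.mod_eq_of_lt hkn]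
    have hspec := (gstep a P (P.length - k - 1) hkpf).choose_spec
    have hj1 : P.length - k - 1 + 1 = P.length - k := by omega
    have hidx : P.length - (k + 1) = P.length - k - 1 := by omega
    rw [hidx, congrArg sp hspec]
    refine sp_cons_congr (ih.trans ?_) harr
    exact congrArg (fun i => sp (gfun a P i).2) hj1.symm

lemma so_win_P (a : V) (P : Quiver.Path a a) (h1 : 1 ≤ P.length) :
    sp ((streamOf a P h1).win 0 P.length) = sp P := by
  have := so_win_eq a P h1 P.length le_rfl
  simpa [gfun] using this

lemma so_cpow (a : V) (P : Quiver.Path a a) (h1 : 1 ≤ P.length) :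
    ∀ m, sp (cpow P m) = sp ((streamOf a P h1).win 0 (m * P.length))
  | 0 => by
    have e1 : sp (cpow P 0) = sp ((streamOf a P h1).win 0 0) :=
      (sp_nil_congr (so_vtx0 a P h1)).symm
    exact e1.trans (win_congr _ rfl (by omega))
  | (m + 1) => by
    have e1 : sp P = sp ((streamOf a P h1).win (m * P.length) P.length) :=
      (so_win_P a P h1).symm.trans
        (so_win_mod a P h1 (by simp [Nat.mul_mod_left]) P.length)
    have e2 : sp (cpow P (m + 1)) =
        sp (((streamOf a P h1).win 0 (m * P.length)).comp
          ((streamOf a P h1).win (0 + m * P.length) P.length)) :=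
      sp_comp_congr (so_cpow a P h1 m)
        (e1.trans (win_congr _ (by omega) rfl))
    refine e2.trans ?_
    refine ((win_add _ 0 (m * P.length) P.length).symm).trans ?_
    exact win_congr _ rfl (by ring)

lemma so_liesOn_of_win (a : V) (P : Quiver.Path a a) (h1 : 1 ≤ P.length)
    {x y : V} (q : Quiver.Path x y) (t l : ℕ)
    (hq : sp q = sp ((streamOf a P h1).win t l)) : LiesOn q P := by
  set S := streamOf a P h1 with hS
  set m := t + l + 1 with hm
  have hml : t + l ≤ m * P.length := by
    have : m ≤ m * P.length := Nat.le_mul_of_pos_right m (by omega)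
    omega
  refine ⟨m, by omega, ?_⟩
  have hsub : IsSubpathP (S.win t l) (S.win 0 (m * P.length)) :=
    win_subpath S 0 (m * P.length) t l (by omega) (by omega)
  exact subpath_congr_right (so_cpow a P h1 m).symm (subpath_congr_left hq.symm hsub)

lemma so_win_of_liesOn (a : V) (P : Quiver.Path a a) (h1 : 1 ≤ P.length)
    {x y : V} (q : Quiver.Path x y) (h : LiesOn q P) :
    ∃ t, sp q = sp ((streamOf a P h1).win t q.length) := by
  obtain ⟨m, _, hsub⟩ := h
  have hsub' := subpath_congr_right (so_cpow a P h1 m) hsub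
  obtain ⟨t, -, -, hq⟩ := subwin _ _ _ q hsub'
  exact ⟨t, hq⟩

lemma arrowList_congr {x y x' y' : V} {p : Quiver.Path x y} {p' : Quiver.Path x' y'}
    (h : sp p = sp p') : arrowList p = arrowList p' := by
  obtain ⟨rfl, rfl, hh⟩ := sp_inj h
  rw [eq_of_heq hh]

lemma arrowList_win (S : QStream V) (s : ℕ) :
    ∀ l, arrowList (S.win s l) = (List.range l).map (fun r => sa (S.arr (s + r)))
  | 0 => rfl
  | (l + 1) => by
    show arrowList (S.win s l) ++ [sa (S.arr (s + l))] = _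
    rw [arrowList_win S s l, List.range_succ, List.map_append]
    rfl

lemma so_arrowList (a : V) (P : Quiver.Path a a) (h1 : 1 ≤ P.length) : arrowList P =
    (List.range P.length).map (fun r => sa ((streamOf a P h1).arr r)) := by
  rw [arrowList_congr (so_win_P a P h1).symm, arrowList_win]
  apply List.map_congr_left
  intro r hr
  exact sa_arr_congr _ (by omega)

lemma so_mem_arrowList (a : V) (P : Quiver.Path a a) (h1 : 1 ≤ P.length)
    {E : SArrow V} (hE : E ∈ arrowList P) :
    ∃ r, r < P.length ∧ E = sa ((streamOf a P h1).arr r) := by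
  rw [so_arrowList a P h1] at hE
  simp only [List.mem_map, List.mem_range] at hE
  obtain ⟨r, hr, hE⟩ := hE
  exact ⟨r, hr, hE.symm⟩

lemma so_arr_mem_arrowList (a : V) (P : Quiver.Path a a) (h1 : 1 ≤ P.length)
    (r : ℕ) (hr : r < P.length) :
    sa ((streamOf a P h1).arr r) ∈ arrowList P := by
  rw [so_arrowList a P h1]
  simp only [List.mem_map, List.mem_range]
  exact ⟨r, hr, rfl⟩

end S2
namespace S2

def phi (M sk j0 l m t : ℕ) : ℕ :=
  if t < M then t + sk - M else j0 + (t - M) - l * min ((t - M) / l) (m - 1)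

lemma phi_lt {M sk j0 l m t : ℕ} (h : t < M) : phi M sk j0 l m t = t + sk - M := if_pos h

lemma phi_ge {M sk j0 l m t : ℕ} (h : M ≤ t) :
    phi M sk j0 l m t = j0 + (t - M) - l * min ((t - M) / l) (m - 1) :=
  if_neg (by omega)

lemma phi_at_M {M sk j0 l m : ℕ} : phi M sk j0 l m M = j0 := by
  rw [phi_ge le_rfl]
  simp

lemma phi_succ (M sk j0 l : ℕ) (hsk : M ≤ sk) (hl : 1 ≤ l) (hj0 : j0 + l = sk) (m t : ℕ) :
    phi M sk j0 l m (t + 1) = phi M sk j0 l m t + 1 ∨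
      (phi M sk j0 l m t + 1 = sk ∧ phi M sk j0 l m (t + 1) = j0) := by
  rcases Nat.lt_or_ge (t + 1) M with h | h
  · left
    rw [phi_lt h, phi_lt (by omega)]
    omega
  rcases Nat.lt_or_ge t M with h2 | h2
  · -- t + 1 = M
    have hM : t + 1 = M := by omega
    right
    rw [phi_lt h2, ← hM, phi_ge le_rfl]
    constructor
    · omega
    · simp
  · -- t ≥ M
    rw [phi_ge h2, phi_ge (by omega)]
    set r := t - M with hr
    have hts : t + 1 - M = r + 1 := by omega
    rw [hts]
    have hdm := Nat.div_add_mod r l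
    set q := r / l with hq
    set rr := r % l with hrr
    have hrrl : rr < l := Nat.mod_lt _ (by omega)
    have hmono : l * min q (m - 1) ≤ l * q := Nat.mul_le_mul_left l (Nat.min_le_left _ _)
    rcases Nat.lt_or_ge (rr + 1) l with hc | hc
    · -- division unchanged
      have hdiv : (r + 1) / l = q := by
        rw [show r + 1 = rr + 1 + l * q by omega, Nat.add_mul_div_left _ _ (by omega : 0 < l),
          Nat.div_eq_of_lt hc]
        omega
      left
      rw [hdiv]
      omega
    · -- rr + 1 = l
      have hrr1 : rr + 1 = l := by omega
      have hdiv : (r + 1) / l = q + 1 := by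
        rw [show r + 1 = l * (q + 1) by rw [Nat.mul_add, Nat.mul_one]; omega,
          Nat.mul_div_cancel_left _ (by omega : 0 < l)]
      rw [hdiv]
      rcases Nat.lt_or_ge q (m - 1) with hqm | hqm
      · right
        have hmin1 : min (q + 1) (m - 1) = q + 1 := by omega
        have hmin2 : min q (m - 1) = q := by omega
        rw [hmin1, hmin2]
        have hexp : l * (q + 1) = l * q + l := by rw [Nat.mul_add, Nat.mul_one]
        omega
      · left
        have hmin1 : min (q + 1) (m - 1) = m - 1 := by omega
        have hmin2 : min q (m - 1) = m - 1 := by omega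
        rw [hmin1, hmin2]
        have : l * (m - 1) ≤ l * q := Nat.mul_le_mul_left l hqm
        omega

def etaS (S : QStream V) (M sk j0 l : ℕ) (hsk : M ≤ sk) (hl : 1 ≤ l) (hj0 : j0 + l = sk)
    (hveq : S.vtx sk = S.vtx j0) (m : ℕ) : QStream V where
  vtx t := S.vtx (phi M sk j0 l m t)
  arr t :=
    recastA rfl
      (by
        show S.vtx (phi M sk j0 l m t + 1) = S.vtx (phi M sk j0 l m (t + 1))
        rcases phi_succ M sk j0 l hsk hl hj0 m t with h | ⟨ha, hb⟩
        · rw [h]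
        · rw [ha, hb]
          exact hveq)
      (S.arr (phi M sk j0 l m t))

lemma etaS_vtx (S : QStream V) (M sk j0 l : ℕ) (hsk : M ≤ sk) (hl : 1 ≤ l) (hj0 : j0 + l = sk)
    (hveq : S.vtx sk = S.vtx j0) (m t : ℕ) :
    (etaS S M sk j0 l hsk hl hj0 hveq m).vtx t = S.vtx (phi M sk j0 l m t) := rfl

lemma etaS_arr (S : QStream V) (M sk j0 l : ℕ) (hsk : M ≤ sk) (hl : 1 ≤ l) (hj0 : j0 + l = sk)
    (hveq : S.vtx sk = S.vtx j0) (m t : ℕ) :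
    sa ((etaS S M sk j0 l hsk hl hj0 hveq m).arr t) = sa (S.arr (phi M sk j0 l m t)) :=
  sa_recastA _ _ _

section Eta

variable (S : QStream V) (M sk j0 l : ℕ) (hsk : M ≤ sk) (hl : 1 ≤ l) (hj0 : j0 + l = sk)
  (hveq : S.vtx sk = S.vtx j0)

/-- E1 : windows in the left region are `S`-windows -/
lemma eta_win_left (m : ℕ) (s len : ℕ) (hs : M ≤ s + sk) (hle : s + len ≤ M) :
    sp ((etaS S M sk j0 l hsk hl hj0 hveq m).win s len) = sp (S.win (s + sk - M) len) := by
  apply win_agree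
  · intro r hr
    rw [etaS_vtx]
    rcases Nat.lt_or_ge (s + r) M with h | h
    · rw [phi_lt h]
      exact congrArg S.vtx (by omega)
    · have hM : s + r = M := by omega
      rw [hM, phi_at_M]
      refine hveq.symm.trans (congrArg S.vtx (by omega))
  · intro r hr
    rw [etaS_arr]
    exact sa_arr_congr S (by rw [phi_lt (by omega)]; omega)

/-- E2 : streams with different jump counts agree on an initial region -/
lemma eta_agree (m m' : ℕ) (hm : 1 ≤ m) (hmm : m ≤ m') (s len : ℕ)
    (hle : s + len ≤ M + m * l) :
    sp ((etaS S M sk j0 l hsk hl hj0 hveq m).win s len) =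
      sp ((etaS S M sk j0 l hsk hl hj0 hveq m').win s len) := by
  have key : ∀ t, t < M + m * l → phi M sk j0 l m t = phi M sk j0 l m' t := by
    intro t ht
    rcases Nat.lt_or_ge t M with h | h
    · rw [phi_lt h, phi_lt h]
    · rw [phi_ge h, phi_ge h]
      have hdiv : (t - M) / l ≤ m - 1 := by
        have : t - M < m * l := by omega
        have := (Nat.div_lt_iff_lt_mul (by omega : 0 < l)).mpr this
        omega
      rw [min_eq_left hdiv, min_eq_left (by omega : (t - M) / l ≤ m' - 1)]
  apply win_agree
  · intro r hr
    rw [etaS_vtx, etaS_vtx]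
    rcases Nat.lt_or_ge (s + r) (M + m * l) with h | h
    · rw [key _ h]
    · -- boundary : s + r = M + m * l
      have hb : s + r = M + m * l := by omega
      have hml : m * l / l = m := Nat.mul_div_cancel m (by omega : 0 < l)
      have hphi1 : phi M sk j0 l m (s + r) = sk := by
        rw [phi_ge (by omega), hb]
        have h2 : M + m * l - M = m * l := by omega
        rw [h2, hml, min_eq_right (by omega : m - 1 ≤ m)]
        have hexp : l * (m - 1) + l = l * m := by rw [← Nat.mul_succ]; congr 1; omega
        have hle2 : l * (m - 1) ≤ m * l := by rw [Nat.mul_comm m l]; omega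
        rw [Nat.mul_comm m l] at *
        omega
      rcases Nat.eq_or_lt_of_le hmm with he | hlt
      · subst he; rfl
      · have hphi2 : phi M sk j0 l m' (s + r) = j0 := by
          rw [phi_ge (by omega), hb]
          have h2 : M + m * l - M = m * l := by omega
          rw [h2, hml, min_eq_left (by omega : m ≤ m' - 1)]
          have : l * m = m * l := Nat.mul_comm _ _
          omega
        rw [hphi1, hphi2]
        exact hveq
  · intro r hr
    rw [etaS_arr, etaS_arr]
    exact sa_arr_congr S (key _ (by omega))

end Eta

/-- shift across the first jump : `η_{m+1}` from `M` looks like `η_m` from `M - l` -/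
lemma phi_shift (M sk j0 l : ℕ) (hsk : M ≤ sk) (hl : 1 ≤ l) (hj0 : j0 + l = sk)
    (m : ℕ) (hm : 1 ≤ m) (hlM : l ≤ M) (r : ℕ) :
    phi M sk j0 l (m + 1) (M + r) = phi M sk j0 l m (M - l + r) := by
  rcases Nat.lt_or_ge r l with h | h
  · rw [phi_ge (by omega), phi_lt (by omega)]
    have h1 : M + r - M = r := by omega
    rw [h1, Nat.div_eq_of_lt h]
    simp
    omega
  · rw [phi_ge (by omega), phi_ge (by omega)]
    have h1 : M + r - M = r := by omega
    have h2 : M - l + r - M = r - l := by omega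
    rw [h1, h2]
    have hdiv : r / l = (r - l) / l + 1 := by
      conv_lhs => rw [show r = (r - l) + l by omega]
      rw [Nat.add_div_right _ (by omega : 0 < l)]
    rw [hdiv]
    set q' := (r - l) / l with hq'
    have hql : l * q' ≤ r - l := by
      rw [hq', Nat.mul_comm]
      exact Nat.div_mul_le_self _ _
    have hmin : min (q' + 1) (m + 1 - 1) = min q' (m - 1) + 1 := by omega
    rw [hmin, Nat.mul_add, Nat.mul_one]
    have : l * min q' (m - 1) ≤ l * q' := Nat.mul_le_mul_left l (Nat.min_le_left _ _)
    omega

section Eta2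

variable (S : QStream V) (M sk j0 l : ℕ) (hsk : M ≤ sk) (hl : 1 ≤ l) (hj0 : j0 + l = sk)
  (hveq : S.vtx sk = S.vtx j0)

lemma eta_shift (m : ℕ) (hm : 1 ≤ m) (hlM : l ≤ M) (len : ℕ) :
    sp ((etaS S M sk j0 l hsk hl hj0 hveq (m + 1)).win M len) =
      sp ((etaS S M sk j0 l hsk hl hj0 hveq m).win (M - l) len) := by
  apply win_agree
  · intro r _
    rw [etaS_vtx, etaS_vtx, phi_shift M sk j0 l hsk hl hj0 m hm hlM r]
  · intro r _
    rw [etaS_arr, etaS_arr]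
    exact sa_arr_congr S (phi_shift M sk j0 l hsk hl hj0 m hm hlM r)

end Eta2

/-- σ-region formula -/
lemma phi_sigma (M sk j0 l : ℕ) (hsk : M ≤ sk) (hl : 1 ≤ l) (hj0 : j0 + l = sk)
    (m : ℕ) (hm : 1 ≤ m) (hlM : l ≤ M) (u : ℕ) (hu : u ≤ l * m) :
    phi M sk j0 l m (M - l + u) = j0 + u % l := by
  rcases Nat.lt_or_ge u l with h | h
  · rw [phi_lt (by omega), Nat.mod_eq_of_lt h]
    omega
  · rw [phi_ge (by omega)]
    have h1 : M - l + u - M = u - l := by omega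
    rw [h1]
    have hdiv : (u - l) / l ≤ m - 1 := by
      have h2 : u - l ≤ l * (m - 1) := by
        have : l * (m - 1) + l = l * m := by rw [← Nat.mul_succ]; congr 1; omega
        omega
      calc (u - l) / l ≤ l * (m - 1) / l := Nat.div_le_div_right h2
        _ = m - 1 := Nat.mul_div_cancel_left _ (by omega : 0 < l)
    rw [min_eq_left hdiv]
    have hmod : (u - l) % l = u % l := by
      conv_rhs => rw [show u = (u - l) + l by omega]
      rw [Nat.add_mod_right]
    have hdm := Nat.div_add_mod (u - l) l
    rw [← hmod]
    omega

end S2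
namespace S2

lemma rho_congr {ρ : PathSet V} {x y x' y' : V} {p : Quiver.Path x y} {p' : Quiver.Path x' y'}
    (h : sp p = sp p') (hp : ρ p) : ρ p' := by
  obtain ⟨rfl, rfl, hh⟩ := sp_inj h
  rwa [← eq_of_heq hh]

/-- the covering workhorse : three consecutive windows, two ρ-elements, all
`d`-windows inside are in ρ -/
lemma cov_windows (d : ℕ) (ρ : PathSet V) (hcov : DCovering d ρ) (S' : QStream V)
    (s1 l1 l2 l3 t : ℕ)
    (h1 : ρ (S'.win s1 (l1 + l2))) (h2 : ρ (S'.win (s1 + l1) (l2 + l3)))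
    (hl2 : 1 ≤ l2) (ht1 : s1 ≤ t) (ht2 : t + d ≤ s1 + l1 + l2 + l3) :
    ρ (S'.win t d) := by
  have hpq : ρ ((S'.win s1 l1).comp (S'.win (s1 + l1) l2)) :=
    rho_congr (win_add S' s1 l1 l2) h1
  have hqr : ρ ((S'.win (s1 + l1) l2).comp (S'.win (s1 + l1 + l2) l3)) :=
    rho_congr (win_add S' (s1 + l1) l2 l3) h2
  have hbig : sp (S'.win s1 (l1 + l2 + l3)) =
      sp (((S'.win s1 l1).comp (S'.win (s1 + l1) l2)).comp (S'.win (s1 + l1 + l2) l3)) := by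
    refine (win_add S' s1 (l1 + l2) l3).trans ?_
    exact sp_comp_congr (win_add S' s1 l1 l2) (win_congr S' (by omega) rfl)
  have hsub : IsSubpathP (S'.win t d) (S'.win s1 (l1 + l2 + l3)) :=
    win_subpath S' s1 (l1 + l2 + l3) t d ht1 (by omega)
  exact hcov _ _ _ hpq hqr (by rw [win_length]; omega) _ (win_length S' t d)
    (subpath_congr_right hbig hsub)

/-- every nonempty path whose arrows lie on `T` is either aligned with the
`T`-stream, or has a first jump -/
lemma jump_or_aligned (a : V) (T : Quiver.Path a a) (h1 : 1 ≤ T.length)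
    {x y : V} (q : Quiver.Path x y) (hq : 1 ≤ q.length)
    (harr : ∀ E ∈ arrowList q, E ∈ arrowList T) :
    (∃ s, sp q = sp ((streamOf a T h1).win s q.length)) ∨
    (∃ (s k : ℕ) (x1 : V) (pfx : Quiver.Path x x1) (rest : Quiver.Path x1 y),
      q = pfx.comp rest ∧ pfx.length = k ∧ 1 ≤ k ∧ k + rest.length = q.length ∧
      sp pfx = sp ((streamOf a T h1).win s k) ∧
      ∃ (j : ℕ) (x2 : V) (g : x1 ⟶ x2) (rest' : Quiver.Path x2 y),
        j < T.length ∧ rest = g.toPath.comp rest' ∧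
        sa g = sa ((streamOf a T h1).arr j) ∧ j ≠ (s + k) % T.length) := by
  induction q with
  | nil => simp [Quiver.Path.length] at hq
  | @cons b yy q0 g ih =>
    set S := streamOf a T h1 with hS
    have hgT : (⟨b, yy, g⟩ : SArrow V) ∈ arrowList T := by
      apply harr
      show _ ∈ arrowList q0 ++ [(⟨b, yy, g⟩ : SArrow V)]
      simp
    obtain ⟨jm, hjm, hgj⟩ := so_mem_arrowList a T h1 hgT
    rcases Nat.lt_or_ge q0.length 1 with hq0 | hq0
    · -- q0 is trivial : single arrow, aligned
      left
      refine ⟨jm, ?_⟩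
      have hq0' : sp q0 = sp (Quiver.Path.nil (a := x)) := sp_of_length_zero q0 (by omega)
      have hxb : x = b := by
        obtain ⟨-, h2, -⟩ := sp_inj hq0'
        exact h2.symm
      have hbv : b = S.vtx jm := by
        obtain ⟨h2, -, -⟩ := sa_inj hgj
        exact h2
      have hlen : q0.length + 1 = 1 := by omega
      refine Eq.trans ?_ (win_congr S rfl hlen.symm)
      show sp (q0.cons g) = sp ((S.win jm 0).cons (S.arr (jm + 0)))
      refine sp_cons_congr ?_ (hgj.trans (sa_arr_congr S (by omega)))
      exact hq0'.trans (sp_nil_congr (hxb.trans hbv))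
    · rcases ih hq0 (fun E hE => harr E (by
        show E ∈ arrowList q0 ++ [(⟨b, yy, g⟩ : SArrow V)]
        simp [hE])) with ⟨s, hal⟩ | ⟨s, k, x1, pfx, rest, hcomp, hpl, hk1, hkl, hal, j, x2, g',
          rest', hj, hrest, hg', hjne⟩
      · -- q0 aligned
        by_cases hcase : jm = (s + q0.length) % T.length
        · left
          refine ⟨s, ?_⟩
          show sp (q0.cons g) = sp (S.win s (q0.cons g).length)
          have hlc : (q0.cons g).length = q0.length + 1 := rfl
          rw [hlc]
          show _ = sp ((S.win s q0.length).cons (S.arr (s + q0.length)))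
          refine sp_cons_congr hal (hgj.trans ?_)
          apply so_arr_mod a T h1
          rw [Nat.mod_eq_of_lt hjm]
          exact hcase
        · right
          refine ⟨s, q0.length, b, q0, g.toPath, (comp_toPath q0 g).symm, rfl, hq0, ?_, hal,
            jm, yy, g, Quiver.Path.nil, hjm, (Quiver.Path.comp_nil _).symm, hgj, hcase⟩
          show q0.length + g.toPath.length = (q0.cons g).length
          have : g.toPath.length = 1 := rfl
          rw [this]
          rfl
      · -- jump already inside q0
        right
        refine ⟨s, k, x1, pfx, rest.cons g, ?_, hpl, hk1, ?_, hal,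
          j, x2, g', rest'.cons g, hj, ?_, hg', hjne⟩
        · rw [hcomp]
          rfl
        · show k + (rest.length + 1) = q0.length + 1
          omega
        · rw [hrest]
          rfl

end S2

open S2

/-- under the stated assumptions on the closed trail `T`, any path `p` of
length `d` whose arrows all come from `T` but which does not lie on `T` is not in `ρ`. -/
theorem stmt_2 {V : Type u} [Quiver.{v + 1} V] [Fintype V] [∀ a b : V, Fintype (a ⟶ b)]
    (d : ℕ) (hd : 2 ≤ d) (ρ : PathSet V)
    (hρlen : ∀ ⦃a b : V⦄ (p : Quiver.Path a b), ρ p → p.length = d)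
    (hcov : DCovering d ρ)
    (hfd : ∀ ⦃w : V⦄ (T : Quiver.Path w w), IsClosedTrail T →
      ∃ (x y : V) (q : Quiver.Path x y), ρ q ∧ LiesOn q T)
    {a : V} (T : Quiver.Path a a) (hT : IsClosedTrail T) (hn : 2 ≤ T.length)
    (hρT : RhoTSub d ρ T)
    (hnoloop : ∀ e ∈ arrowList T, e.1 ≠ e.2.1)
    (hnosub : ∀ ⦃w : V⦄ (q : Quiver.Path w w), LiesOn q T → 2 ≤ q.length →
      q.length < T.length → ¬ RhoTSub d ρ q)
    {x y : V} (p : Quiver.Path x y) (hp : p.length = d)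
    (harr : ∀ e ∈ arrowList p, e ∈ arrowList T)
    (hnotlie : ¬ LiesOn p T) :
    ¬ ρ p := by
  intro hρp
  classical
  have hn1 : 1 ≤ T.length := by omega
  set NN := T.length with hNN
  set S := streamOf a T hn1 with hS
  have hpure : ∀ tt, ρ (S.win tt d) := fun tt =>
    hρT _ (win_length S tt d) (so_liesOn_of_win a T hn1 _ tt d rfl)
  rcases jump_or_aligned a T hn1 p (by omega) harr with ⟨s, hal⟩ |
    ⟨s0, k, x1, pfx, rest, hcomp, hpl, hk1, hkl, hal0, j, x2, g, rest', hj, hrest, hg, hjne⟩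
  · exact hnotlie (so_liesOn_of_win a T hn1 p s p.length hal)
  -- bump the alignment position up
  set M := 2 * d with hM
  set cc := 2 * d + NN with hcc
  set s := s0 + cc * NN with hs
  have hal : sp pfx = sp (S.win s k) :=
    hal0.trans (so_win_mod a T hn1 (by rw [hs, Nat.add_mul_mod_self_right]) k)
  have hjne' : j ≠ (s + k) % NN := by
    rwa [hs, show s0 + cc * NN + k = s0 + k + cc * NN by omega, Nat.add_mul_mod_self_right]
  set sk := s + k with hsk
  have hccn : cc ≤ cc * NN := Nat.le_mul_of_pos_right cc (by omega)
  have hskM : M ≤ sk := by omega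
  -- the jump data
  have hx1 : x1 = S.vtx sk := by
    obtain ⟨-, h2, -⟩ := sp_inj hal
    exact h2
  have hx1' : x1 = S.vtx j := by
    obtain ⟨h2, -, -⟩ := sa_inj hg
    exact h2
  have hveq0 : S.vtx sk = S.vtx j := hx1.symm.trans hx1'
  -- rest length
  have hrestlen : rest.length = 1 + rest'.length := by
    rw [hrest, Quiver.Path.length_comp]
    rfl
  have hkd : k + 1 ≤ d := by omega
  -- ℓ and j₀
  set LL := (sk - j) % NN with hLL
  have hLn : LL < NN := Nat.mod_lt _ (by omega)
  have hL1 : 1 ≤ LL := by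
    rcases Nat.eq_zero_or_pos LL with h0 | h
    · exfalso
      apply hjne'
      obtain ⟨q', hq'⟩ := Nat.dvd_of_mod_eq_zero (hLL ▸ h0)
      have hq'' : sk - j = q' * NN := by rw [hq', Nat.mul_comm]
      have hjsk : j ≤ sk := by omega
      have hsk' : sk = j + q' * NN := by omega
      rw [hsk', Nat.add_mul_mod_self_right, Nat.mod_eq_of_lt hj]
    · exact h
  set j0 := sk - LL with hj0def
  have hj0 : j0 + LL = sk := by omega
  have hj0j : j0 % NN = j % NN := by
    have hdm := Nat.div_add_mod (sk - j) NN
    have hdm2 : (sk - j) / NN * NN + LL = sk - j := by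
      rw [hLL, Nat.mul_comm ((sk - j) / NN) NN]
      exact hdm
    have hjsk : j ≤ sk := by omega
    have hj0e : j0 = j + ((sk - j) / NN) * NN := by omega
    rw [hj0e, Nat.add_mul_mod_self_right]
  have hveq : S.vtx sk = S.vtx j0 :=
    hveq0.trans (so_vtx_mod a T hn1 (hj0j.symm))
  -- L ≥ 2 using no loops
  have hL2 : 2 ≤ LL := by
    by_contra hL2'
    have hLeq : LL = 1 := by omega
    have hmem := so_arr_mem_arrowList a T hn1 (j0 % NN) (Nat.mod_lt _ (by omega))
    apply hnoloop _ hmem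
    show S.vtx (j0 % NN) = S.vtx (j0 % NN + 1)
    have e1 : S.vtx (j0 % NN) = S.vtx j0 :=
      so_vtx_mod a T hn1 (Nat.mod_eq_of_lt (Nat.mod_lt _ (by omega)))
    have e2 : S.vtx (j0 % NN + 1) = S.vtx sk := by
      refine so_vtx_mod a T hn1 ?_
      rw [Nat.mod_add_mod, show j0 + 1 = sk by omega]
    rw [e1, e2]
    exact hveq.symm
  -- the subcycle C
  set C0 := S.win j0 LL with hC0
  have hCe : S.vtx (j0 + LL) = S.vtx j0 := by rw [hj0]; exact hveq
  set C : Quiver.Path (S.vtx j0) (S.vtx j0) := recastP rfl hCe C0 with hC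
  have hCsp : sp C = sp C0 := sp_recastP _ _ _
  have hClen : C.length = LL := by rw [sp_length hCsp, hC0, win_length]
  have hCLies : LiesOn C T := so_liesOn_of_win a T hn1 C j0 LL hCsp
  refine hnosub C hCLies (by omega) (by omega) ?_
  -- ===== prove RhoTSub d ρ C =====
  -- E1 right region is pure T from j0
  have hE1right : ∀ len, sp ((etaS S M sk j0 LL hskM hL1 hj0 hveq 1).win M len) =
      sp (S.win j0 len) := by
    intro len
    apply win_agree
    · intro r _
      rw [etaS_vtx]
      refine congrArg S.vtx ?_
      rw [phi_ge (by omega : M ≤ M + r), show M + r - M = r by omega]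
      simp
    · intro r _
      rw [etaS_arr]
      refine sa_arr_congr S ?_
      rw [phi_ge (by omega : M ≤ M + r), show M + r - M = r by omega]
      simp
  have hMd : d ≤ M := by omega
  -- ===== K1 : the base case of the chain =====
  have K1 : ∀ a', 1 ≤ a' → a' + 1 ≤ d →
      ρ ((etaS S M sk j0 LL hskM hL1 hj0 hveq 1).win (M - a') d) := by
    have hgj0 : sa g = sa (S.arr j0) := hg.trans (so_arr_mod a T hn1 hj0j.symm)
    set E1 := etaS S M sk j0 LL hskM hL1 hj0 hveq 1 with hE1def
    -- first covering application : slide across the jump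
    set pcov := E1.win (M - d) (d - k) with hpcov
    set q := recastP (congrArg E1.vtx (show M - k = M - d + (d - k) by omega)) rfl
      (E1.win (M - k) k) with hqdef
    have hphiMk : phi M sk j0 LL 1 (M - k + k) = j0 := by
      rw [show M - k + k = M by omega]
      exact phi_at_M
    have hx1E : x1 = E1.vtx (M - k + k) := by
      rw [hx1, hE1def, etaS_vtx, hphiMk]
      exact hveq
    set r := recastP hx1E rfl rest with hrdef
    have hq0 : sp q = sp (E1.win (M - k) k) := sp_recastP _ _ _
    have hPQ1 : sp (pcov.comp q) = sp (E1.win (M - d) d) := by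
      refine (sp_comp_congr rfl (hq0.trans (win_congr E1 (by omega) rfl))).trans ?_
      refine ((win_add E1 (M - d) (d - k) k).symm).trans ?_
      exact win_congr E1 rfl (by omega)
    have hPQ : sp (pcov.comp q) = sp (S.win (M - d + sk - M) d) := by
      refine hPQ1.trans ?_
      exact eta_win_left S M sk j0 LL hskM hL1 hj0 hveq 1 (M - d) d (by omega) (by omega)
    have hpq : ρ (pcov.comp q) := rho_congr hPQ.symm (hpure _)
    have hqpfx : sp q = sp pfx := by
      refine hq0.trans ?_
      refine (eta_win_left S M sk j0 LL hskM hL1 hj0 hveq 1 (M - k) k (by omega)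
        (by omega)).trans ?_
      exact (win_congr S (by omega : M - k + sk - M = s) rfl).trans hal.symm
    have hqr : ρ (q.comp r) := by
      refine rho_congr (sp_comp_congr hqpfx (sp_recastP _ _ _)).symm ?_
      exact hcomp ▸ hρp
    have hqlen1 : 1 ≤ q.length := by
      have := (sp_length hq0).trans (win_length E1 (M - k) k)
      omega
    -- the subpath data
    set X1 := E1.win (M - d + 1) d with hX1def
    set u := E1.win (M - d) 1 with hudef
    have hx2Sj : x2 = S.vtx (j + 1) := by
      obtain ⟨-, h2, -⟩ := sa_inj hg
      exact h2
    have hx2j0 : x2 = S.vtx (j0 + 1) := by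
      rw [hx2Sj]
      refine so_vtx_mod a T hn1 ?_
      rw [← Nat.mod_add_mod, ← hj0j, Nat.mod_add_mod]
    have hphiM1 : ∀ i, i = M + 1 → phi M sk j0 LL 1 i = j0 + 1 := by
      intro i hi
      rw [hi, phi_ge (by omega), show M + 1 - M = 1 by omega]
      simp
    have hWstart : x2 = E1.vtx (M - d + 1 + d) := by
      rw [hx2j0, hE1def, etaS_vtx, hphiM1 _ (by omega)]
    set W' := recastP hWstart rfl rest' with hW'def
    have hW3start : x2 = E1.vtx (M - d + (d + 1)) := by
      rw [hx2j0, hE1def, etaS_vtx, hphiM1 _ (by omega)]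
    set W3 := recastP hW3start rfl rest' with hW3def
    set Z := (E1.win (M - d) (d + 1)).comp W3 with hZdef
    have eR : sp ((u.comp X1).comp W') = sp Z := by
      refine sp_comp_congr ?_ ((sp_recastP _ _ _).trans (sp_recastP _ _ _).symm)
      exact ((win_add E1 (M - d) 1 d).symm).trans (win_congr E1 rfl (by omega))
    -- left side
    have hgE : sa g = sa (E1.arr (M - d + d)) := by
      rw [hE1def, etaS_arr]
      refine hgj0.trans (sa_arr_congr S ?_)
      rw [show M - d + d = M by omega, phi_at_M]
    have hrestM : x1 = E1.vtx (M - d + d) := by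
      rw [hx1, hE1def, etaS_vtx, show M - d + d = M by omega, phi_at_M]
      exact hveq
    set rr := recastP hrestM rfl rest with hrrdef
    have hgpath : sp (g.toPath) = sp ((E1.arr (M - d + d)).toPath) := by
      obtain ⟨h1', h2', h3'⟩ := sa_inj hgE
      subst h1'
      subst h2'
      rw [eq_of_heq h3']
    have hW4start : x2 = E1.vtx (M - d + d + 1) := by
      rw [hx2j0, hE1def, etaS_vtx, hphiM1 _ (by omega)]
    set W4 := recastP hW4start rfl rest' with hW4def
    have c2 : sp rr = sp (((E1.arr (M - d + d)).toPath).comp W4) := by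
      refine (sp_recastP _ _ _).trans ?_
      rw [hrest]
      exact sp_comp_congr hgpath (sp_recastP _ _ _).symm
    have hcw : (E1.win (M - d) d).comp ((E1.arr (M - d + d)).toPath) = E1.win (M - d) (d + 1) :=
      comp_toPath _ _
    have eL : sp ((pcov.comp q).comp r) = sp Z := by
      refine (sp_comp_congr hPQ1 ((sp_recastP _ _ _).trans ((sp_recastP _ _ _).symm.trans
        c2))).trans ?_
      refine (congrArg sp (Quiver.Path.comp_assoc _ _ _).symm).trans ?_
      exact sp_comp_congr (congrArg sp hcw) ((sp_recastP _ _ _).trans (sp_recastP _ _ _).symm)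
    have hX1rho : ρ X1 := by
      refine hcov pcov q r hpq hqr hqlen1 X1 (win_length E1 _ d) ⟨u, W', ?_⟩
      exact eq_of_sp (eL.trans eR.symm)
    -- second covering application : slide within the T-region
    intro a' ha1 ha2
    have hE1M : ρ (E1.win (M - d + 1 + (d - 1)) (1 + (d - 1))) := by
      have h0 : ρ (E1.win M d) := rho_congr (hE1right d).symm (hpure j0)
      exact rho_congr (win_congr E1 (by omega) (by omega)).symm h0
    have hX1' : ρ (E1.win (M - d + 1) (d - 1 + 1)) :=
      rho_congr (win_congr E1 rfl (by omega)) hX1rho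
    exact cov_windows d ρ hcov E1 (M - d + 1) (d - 1) 1 (d - 1) (M - a') hX1'
      hE1M (by omega) (by omega) (by omega)
  -- ===== the full chain K =====
  have K : ∀ m, 1 ≤ m → ∀ a', 1 ≤ a' → a' + (m - 1) * LL + 1 ≤ d →
      ρ ((etaS S M sk j0 LL hskM hL1 hj0 hveq m).win (M - a') d) := by
    intro m hm
    induction m, hm using Nat.le_induction with
    | base =>
      intro a' h1 h2
      exact K1 a' h1 (by omega)
    | succ m hm ih =>
      intro a' ha1 ha2
      have hmLL : LL ≤ m * LL := Nat.le_mul_of_pos_left LL (by omega)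
      have hmul : (m + 1 - 1) * LL = m * LL := by
        congr 1
      have ha2' : a' + m * LL + 1 ≤ d := by omega
      have hLd : LL + 1 ≤ d - 1 := by omega
      have h1 : ρ ((etaS S M sk j0 LL hskM hL1 hj0 hveq (m + 1)).win (M - d + LL)
          (d - LL + LL)) := by
        have hbase := K1 (d - LL) (by omega) (by omega)
        refine rho_congr ?_ hbase
        refine (win_congr _ (by omega : M - (d - LL) = M - d + LL) rfl).trans ?_
        refine (eta_agree S M sk j0 LL hskM hL1 hj0 hveq 1 (m + 1) le_rfl (by omega)
          (M - d + LL) d (by omega)).trans ?_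
        exact win_congr _ rfl (by omega)
      have h2 : ρ ((etaS S M sk j0 LL hskM hL1 hj0 hveq (m + 1)).win
          (M - d + LL + (d - LL)) (LL + (d - LL))) := by
        have hmul2 : (m - 1) * LL + LL = m * LL := by
          rw [← Nat.succ_mul]
          congr 1
          omega
        have hKm := ih LL (by omega) (by omega)
        refine rho_congr ?_ hKm
        refine ((eta_shift S M sk j0 LL hskM hL1 hj0 hveq m hm (by omega) d).symm).trans ?_
        exact win_congr _ (by omega) (by omega)
      exact cov_windows d ρ hcov _ (M - d + LL) (d - LL) LL (d - LL) (M - a') h1 h2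
        (by omega) (by omega) (by omega)
  -- ===== finish : every d-window of C lies in ρ =====
  intro xq yq qq hqlen hqlies
  have hCl1 : 1 ≤ C.length := by omega
  obtain ⟨t, hqwin⟩ := so_win_of_liesOn (S.vtx j0) C hCl1 qq hqlies
  rw [hqlen] at hqwin
  set SC := streamOf (S.vtx j0) C hCl1 with hSCdef
  have htmod : sp (SC.win t d) = sp (SC.win (t % C.length) d) :=
    so_win_mod _ C hCl1 (Nat.mod_mod t C.length).symm d
  set t' := t % C.length with ht'def
  have ht'lt : t' < LL := by
    have := Nat.mod_lt t (show 0 < C.length by omega)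
    omega
  have hlink0 : sp (SC.win 0 C.length) = sp (S.win j0 C.length) := by
    refine (so_win_P _ C hCl1).trans (hCsp.trans ?_)
    exact win_congr S rfl hClen.symm
  obtain ⟨hlv, hla⟩ := win_extract SC S 0 j0 C.length hlink0
  have hSCv : ∀ u', SC.vtx u' = S.vtx (j0 + u' % C.length) := by
    intro u'
    have e1 : SC.vtx u' = SC.vtx (u' % C.length) :=
      so_vtx_mod _ C hCl1 (Nat.mod_mod u' C.length).symm
    have e2 := hlv (u' % C.length) (le_of_lt (Nat.mod_lt _ (by omega)))
    rw [Nat.zero_add] at e2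
    exact e1.trans e2
  have hSCa : ∀ u', sa (SC.arr u') = sa (S.arr (j0 + u' % C.length)) := by
    intro u'
    have e1 : sa (SC.arr u') = sa (SC.arr (u' % C.length)) :=
      so_arr_mod _ C hCl1 (Nat.mod_mod u' C.length).symm
    have e2 := hla (u' % C.length) (Nat.mod_lt _ (by omega))
    rw [Nat.zero_add] at e2
    exact e1.trans e2
  set a' := LL - t' with ha'def
  rcases Nat.lt_or_ge d (a' + 1) with hpureC | hjumpC
  · -- no jump in the window : pure T-window
    have hagree : sp (SC.win t' d) = sp (S.win (j0 + t') d) := by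
      apply win_agree
      · intro w hw
        rw [hSCv]
        rcases Nat.lt_or_ge (t' + w) LL with h | h
        · exact congrArg S.vtx (by rw [hClen, Nat.mod_eq_of_lt h]; omega)
        · have heq : t' + w = LL := by omega
          have hz : (t' + w) % C.length = 0 := by rw [hClen, heq, Nat.mod_self]
          rw [hz]
          refine (congrArg S.vtx (by omega : j0 + 0 = j0)).trans ?_
          exact hveq.symm.trans (congrArg S.vtx (by omega))
      · intro w hw
        rw [hSCa]
        exact sa_arr_congr S (by rw [hClen, Nat.mod_eq_of_lt (by omega : t' + w < LL)]; omega)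
    exact rho_congr (hqwin.trans (htmod.trans hagree)).symm (hpure _)
  · -- jump inside the window
    have ha'1 : 1 ≤ a' := by omega
    obtain ⟨Q, R, hQR, hRlt⟩ : ∃ Q R, Q * LL + R = d - a' - 1 ∧ R < LL :=
      ⟨_, _, Nat.div_add_mod' _ _, Nat.mod_lt _ (by omega)⟩
    set m := Q + 1 with hmdef
    have hlow : (m - 1) * LL ≤ d - a' - 1 := by
      have hQm : m - 1 = Q := by omega
      rw [hQm]
      omega
    have hexp : m * LL = Q * LL + LL := by rw [hmdef, Nat.succ_mul]
    have hup : d - a' ≤ m * LL := by omega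
    have hm1 : 1 ≤ m := by omega
    -- index agreement
    have hidx : ∀ w, w < a' ∨ (a' ≤ w ∧ w - a' < m * LL) →
        j0 + (t' + w) % C.length = phi M sk j0 LL m (M - a' + w) := by
      intro w hcase
      rcases hcase with hcase | ⟨hcase, hr2⟩
      · rw [phi_lt (by omega : M - a' + w < M)]
        rw [hClen, Nat.mod_eq_of_lt (by omega : t' + w < LL)]
        omega
      · obtain ⟨Qr, Rr, hQr, hRr⟩ : ∃ Qr Rr, Qr * LL + Rr = w - a' ∧ Rr < LL :=
          ⟨_, _, Nat.div_add_mod' _ _, Nat.mod_lt _ (by omega)⟩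
        have hrdiv : (w - a') / LL = Qr := by
          rw [show w - a' = Rr + LL * Qr by rw [Nat.mul_comm]; omega, Nat.add_mul_div_left _ _
            (by omega : 0 < LL), Nat.div_eq_of_lt hRr]
          omega
        have hrmod : (w - a') % LL = Rr := by
          rw [show w - a' = Rr + LL * Qr by rw [Nat.mul_comm]; omega, Nat.add_mul_mod_self_left,
            Nat.mod_eq_of_lt hRr]
        have hQrm : Qr ≤ m - 1 := by
          have hQrlt : Qr < m := by
            by_contra hcon
            push_neg at hcon
            have := Nat.mul_le_mul_right LL hcon
            omega
          omega
        rw [phi_ge (by omega : M ≤ M - a' + w), show M - a' + w - M = w - a' by omega,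
          hrdiv, min_eq_left hQrm]
        have h1 : (t' + w) % C.length = Rr := by
          rw [hClen, show t' + w = LL + (w - a') by omega, Nat.add_mod_left, hrmod]
        rw [h1]
        have hcomm : LL * Qr = Qr * LL := Nat.mul_comm _ _
        omega
    have hagree : sp (SC.win t' d) =
        sp ((etaS S M sk j0 LL hskM hL1 hj0 hveq m).win (M - a') d) := by
      apply win_agree
      · intro w hw
        rw [hSCv, etaS_vtx]
        rcases Nat.lt_or_ge (w : ℕ) a' with hcase | hcase
        · exact congrArg S.vtx (hidx w (Or.inl hcase))
        rcases Nat.lt_or_ge (w - a') (m * LL) with hr2 | hr2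
        · exact congrArg S.vtx (hidx w (Or.inr ⟨hcase, hr2⟩))
        · -- boundary : w - a' = m * LL, vertex only
          have hreq : w - a' = m * LL := by omega
          have h1 : (t' + w) % C.length = 0 := by
            rw [hClen, show t' + w = LL + (w - a') by omega, Nat.add_mod_left, hreq,
              Nat.mul_mod_left]
          rw [h1]
          have hphi : phi M sk j0 LL m (M - a' + w) = sk := by
            rw [phi_ge (by omega), show M - a' + w - M = w - a' by omega, hreq]
            rw [Nat.mul_div_cancel _ (by omega : 0 < LL)]
            rw [min_eq_right (by omega : m - 1 ≤ m)]
            have hexp2 : LL * (m - 1) + LL = LL * m := by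
              calc LL * (m - 1) + LL = LL * (m - 1 + 1) := (Nat.mul_succ LL (m - 1)).symm
                _ = LL * m := by rw [show m - 1 + 1 = m by omega]
            have hcomm : LL * m = m * LL := Nat.mul_comm _ _
            omega
          rw [hphi]
          exact (congrArg S.vtx (by omega : j0 + 0 = j0)).trans hveq.symm
      · intro w hw
        rw [hSCa, etaS_arr]
        apply sa_arr_congr
        rcases Nat.lt_or_ge (w : ℕ) a' with hcase | hcase
        · exact hidx w (Or.inl hcase)
        · exact hidx w (Or.inr ⟨hcase, by omega⟩)
    have hρwin := K m hm1 a' ha'1 (by omega)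
    exact rho_congr (hqwin.trans (htmod.trans hagree)).symm hρwin
end

section
/- Let Q be a finite quiver, let d ≥ 2, and let ρ be a d-covering set of paths of Q, each of length d. Let α be a loop of Q with α^d ∈ ρ such that no element of ρ has the form α^{d-1}β or βα^{d-1} with β an arrow distinct from α. Then α^d has no overlaps with any element of ρ∖{α^d}: no element of ρ other than α^d properly overlaps α^d, and α^d does not properly overlap any element of ρ other than α^d. -/
open Quiver

universe u v

variable {V : Type u} [Quiver.{v + 1} V]

theorem aux_cpow_length {a : V} (e : a ⟶ a) (n : ℕ) :
    (cpow (Quiver.Hom.toPath e) n).length = n := by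
  induction n with
  | zero => rfl
  | succ n ih =>
    show ((cpow _ n).comp _).length = n + 1
    rw [Quiver.Path.length_comp, ih]
    rfl

theorem aux_cpow_add {a : V} (T : Quiver.Path a a) (m n : ℕ) :
    cpow T (m + n) = (cpow T m).comp (cpow T n) := by
  induction n with
  | zero => simp [cpow]
  | succ n ih =>
    rw [← Nat.add_assoc]
    show (cpow T (m + n)).comp T = _
    rw [ih]
    show _ = (cpow T m).comp ((cpow T n).comp T)
    rw [Quiver.Path.comp_assoc]

theorem aux_comm {a : V} (e : a ⟶ a) (n : ℕ) :
    (Quiver.Hom.toPath e).comp (cpow (Quiver.Hom.toPath e) n)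
      = cpow (Quiver.Hom.toPath e) (n + 1) := by
  have h1 : cpow (Quiver.Hom.toPath e) 1 = Quiver.Hom.toPath e := by
    show Quiver.Path.nil.comp _ = _
    rw [Quiver.Path.nil_comp]
  rw [Nat.add_comm n 1, aux_cpow_add, h1]

theorem aux_cons_comp {a b c d : V} (p : Quiver.Path a b) (e : b ⟶ c)
    (r : Quiver.Path c d) :
    (p.cons e).comp r = p.comp ((Quiver.Hom.toPath e).comp r) := by
  rw [show p.cons e = p.comp (Quiver.Hom.toPath e) from rfl, Quiver.Path.comp_assoc]

theorem aux_subpath_comp_left {b c a e f : V} (w : Quiver.Path f a) {s : Quiver.Path b c}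
    {X : Quiver.Path a e} (h : IsSubpathP s X) : IsSubpathP s (w.comp X) := by
  obtain ⟨U, Vv, rfl⟩ := h
  exact ⟨w.comp U, Vv, by rw [← Quiver.Path.comp_assoc, ← Quiver.Path.comp_assoc]⟩

theorem aux_subpath_comp_right {b c a e f : V} (w : Quiver.Path e f) {s : Quiver.Path b c}
    {X : Quiver.Path a e} (h : IsSubpathP s X) : IsSubpathP s (X.comp w) := by
  obtain ⟨U, Vv, rfl⟩ := h
  exact ⟨U, Vv.comp w, by rw [Quiver.Path.comp_assoc ((U.comp s)) Vv w]⟩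

theorem aux_sarrow_inj {a b c d : V} {e : a ⟶ b} {f : c ⟶ d}
    (h : (⟨a, b, e⟩ : SArrow V) = ⟨c, d, f⟩) : ∃ _ : a = c, ∃ _ : b = d, HEq e f := by
  injection h with h1 h2
  subst h1
  injection eq_of_heq h2 with h3 h4
  exact ⟨rfl, h3, h4⟩

theorem aux_align {a b₂ c : V} (q₂ : Quiver.Path b₂ c) :
    ∀ {b₁ : V} (p₁ : Quiver.Path a b₁) (q₁ : Quiver.Path b₁ c) (p₂ : Quiver.Path a b₂),
      p₁.comp q₁ = p₂.comp q₂ → p₁.length ≤ p₂.length →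
      ∃ w : Quiver.Path b₁ b₂, p₂ = p₁.comp w ∧ q₁ = w.comp q₂ := by
  induction q₂ with
  | nil =>
    intro b₁ p₁ q₁ p₂ h hl
    exact ⟨q₁, by simpa using h.symm, by simp⟩
  | cons q₂' e ih =>
    intro b₁ p₁ q₁ p₂ h hl
    cases q₁ with
    | nil =>
      exfalso
      have hle := congrArg Quiver.Path.length h
      simp [Quiver.Path.length_comp] at hle
      omega
    | cons q₁' f =>
      simp only [Quiver.Path.comp_cons, Quiver.Path.cons.injEq] at h
      obtain ⟨rfl, h2, h3⟩ := h
      obtain ⟨w, hw1, hw2⟩ := ih p₁ q₁' p₂ h2.eq hl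
      refine ⟨w, hw1, ?_⟩
      rw [Quiver.Path.comp_cons, ← hw2, h3.eq]

theorem aux_comp_eq_pow {u : V} (α : u ⟶ u) :
    ∀ (m : ℕ) {x : V} (v : Quiver.Path u x) (w : Quiver.Path x u),
      v.comp w = cpow (Quiver.Hom.toPath α) m →
      ∃ _ : x = u, HEq v (cpow (Quiver.Hom.toPath α) v.length) ∧
        HEq w (cpow (Quiver.Hom.toPath α) w.length) := by
  intro m
  induction m with
  | zero =>
    intro x v w h
    cases w with
    | nil =>
      have hv : v = cpow (Quiver.Hom.toPath α) 0 := by simpa using h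
      have hl : v.length = 0 := by rw [hv]; rfl
      exact ⟨rfl, by rw [hl, hv], HEq.rfl⟩
    | cons w' f =>
      exfalso
      have hle := congrArg Quiver.Path.length h
      simp [Quiver.Path.length_comp, aux_cpow_length] at hle
  | succ m ih =>
    intro x v w h
    cases w with
    | nil =>
      have hv : v = cpow (Quiver.Hom.toPath α) (m + 1) := by simpa using h
      have hl : v.length = m + 1 := by rw [hv, aux_cpow_length]
      exact ⟨rfl, by rw [hl, hv], HEq.rfl⟩
    | cons w' f =>
      have h2 : (v.comp w').cons f = (cpow (Quiver.Hom.toPath α) m).cons α := h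
      simp only [Quiver.Path.cons.injEq] at h2
      obtain ⟨rfl, hpq, hf⟩ := h2
      obtain ⟨hx, hv, hw'⟩ := ih v w' hpq.eq
      subst hx
      refine ⟨rfl, hv, ?_⟩
      have hcast : cpow (Quiver.Hom.toPath α) ((w'.cons f).length)
          = (cpow (Quiver.Hom.toPath α) w'.length).cons α := rfl
      rw [hcast, ← eq_of_heq hw', hf.eq]

theorem aux_ov_pow {u : V} (α : u ⟶ u) (d : ℕ) (hd : 2 ≤ d) (ρ : PathSet V)
    (h1 : ∀ ⦃w : V⦄ (β : u ⟶ w), (⟨u, w, β⟩ : SArrow V) ≠ ⟨u, u, α⟩ →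
      ¬ ρ ((cpow (Quiver.Hom.toPath α) (d - 1)).comp (Quiver.Hom.toPath β))) :
    ∀ (k : ℕ) {y : V} (ov : Quiver.Path u y), ov.length = k →
      (∀ ⦃x' y' : V⦄ (s : Quiver.Path x' y'), s.length = d →
        IsSubpathP s ((cpow (Quiver.Hom.toPath α) d).comp ov) → ρ s) →
      ∃ _ : y = u, HEq ov (cpow (Quiver.Hom.toPath α) k) := by
  intro k
  induction k with
  | zero =>
    intro y ov hlen _
    cases ov with
    | nil => exact ⟨rfl, HEq.rfl⟩
    | cons ov' f => simp at hlen
  | succ k ih =>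
    intro y ov hlen H
    obtain ⟨z, e, ov', hl', rfl⟩ := ov.eq_toPath_comp_of_length_eq_succ hlen
    have hsplit : cpow (Quiver.Hom.toPath α) d
        = (Quiver.Hom.toPath α).comp (cpow (Quiver.Hom.toPath α) (d - 1)) := by
      rw [aux_comm, show d - 1 + 1 = d from by omega]
    have hs : ρ ((cpow (Quiver.Hom.toPath α) (d - 1)).comp (Quiver.Hom.toPath e)) := by
      apply H _ (by rw [Quiver.Path.length_comp, aux_cpow_length]; show d - 1 + 1 = d; omega)
      refine ⟨Quiver.Hom.toPath α, ov', ?_⟩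
      rw [hsplit]
      simp [Quiver.Path.comp_assoc]
      rw [aux_cons_comp, Quiver.Path.comp_assoc]
    have he : (⟨u, z, e⟩ : SArrow V) = ⟨u, u, α⟩ := by
      by_contra hne; exact h1 e hne hs
    obtain ⟨-, hz, he'⟩ := aux_sarrow_inj he
    subst hz
    simp only [eq_of_heq he'] at H
    have hcomm : (cpow (Quiver.Hom.toPath α) d).comp ((Quiver.Hom.toPath α).comp ov')
        = (Quiver.Hom.toPath α).comp ((cpow (Quiver.Hom.toPath α) d).comp ov') := by
      rw [← Quiver.Path.comp_assoc, ← Quiver.Path.comp_assoc, aux_comm]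
      rfl
    obtain ⟨hy, hov'⟩ := ih ov' hl' (fun x' y' s hsl hsub =>
      H s hsl (by rw [hcomm]; exact aux_subpath_comp_left _ hsub))
    subst hy
    refine ⟨rfl, ?_⟩
    rw [eq_of_heq he', eq_of_heq hov', aux_comm]

theorem aux_v_pow {u : V} (α : u ⟶ u) (d : ℕ) (hd : 2 ≤ d) (ρ : PathSet V)
    (h2 : ∀ ⦃w : V⦄ (β : w ⟶ u), (⟨w, u, β⟩ : SArrow V) ≠ ⟨u, u, α⟩ →
      ¬ ρ ((Quiver.Hom.toPath β).comp (cpow (Quiver.Hom.toPath α) (d - 1)))) :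
    ∀ (k : ℕ) {x : V} (v : Quiver.Path x u), v.length = k →
      (∀ ⦃x' y' : V⦄ (s : Quiver.Path x' y'), s.length = d →
        IsSubpathP s (v.comp (cpow (Quiver.Hom.toPath α) d)) → ρ s) →
      ∃ _ : x = u, HEq v (cpow (Quiver.Hom.toPath α) k) := by
  intro k
  induction k with
  | zero =>
    intro x v hlen _
    cases v with
    | nil => exact ⟨rfl, HEq.rfl⟩
    | cons v' f => simp at hlen
  | succ k ih =>
    intro x v hlen H
    cases v with
    | nil => simp at hlen
    | cons v' e =>
      have hl' : v'.length = k := by simpa using hlen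
      have hsplit : cpow (Quiver.Hom.toPath α) d
          = (cpow (Quiver.Hom.toPath α) (d - 1)).comp (Quiver.Hom.toPath α) := by
        conv_lhs => rw [show d = d - 1 + 1 from by omega]
        rfl
      have hs : ρ ((Quiver.Hom.toPath e).comp (cpow (Quiver.Hom.toPath α) (d - 1))) := by
        apply H _ (by rw [Quiver.Path.length_comp, aux_cpow_length]; show 1 + (d - 1) = d; omega)
        refine ⟨v', Quiver.Hom.toPath α, ?_⟩
        rw [aux_cons_comp, hsplit]
        simp [Quiver.Path.comp_assoc]
      have he : (⟨_, u, e⟩ : SArrow V) = ⟨u, u, α⟩ := by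
        by_contra hne; exact h2 e hne hs
      obtain ⟨hz, -, he'⟩ := aux_sarrow_inj he
      subst hz
      simp only [eq_of_heq he'] at H
      have hcomm : (v'.cons α).comp (cpow (Quiver.Hom.toPath α) d)
          = (v'.comp (cpow (Quiver.Hom.toPath α) d)).comp (Quiver.Hom.toPath α) := by
        rw [aux_cons_comp, aux_comm, Quiver.Path.comp_assoc]
        rfl
      obtain ⟨hx, hv'⟩ := ih v' hl' (fun x' y' s hsl hsub =>
        H s hsl (by rw [hcomm]; exact aux_subpath_comp_right _ hsub))
      subst hx
      refine ⟨rfl, ?_⟩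
      rw [eq_of_heq he', eq_of_heq hv']
      exact HEq.rfl

/-- if `α` is a loop with `α^d ∈ ρ` and no element of `ρ` has the form
`α^{d-1}β` or `βα^{d-1}` with `β` an arrow distinct from `α`, then `α^d` has no
overlaps with any element of `ρ∖{α^d}`. -/
theorem stmt_3 {V : Type u} [Quiver.{v + 1} V] [Fintype V] [∀ a b : V, Fintype (a ⟶ b)]
    (d : ℕ) (hd : 2 ≤ d) (ρ : PathSet V)
    (hρlen : ∀ ⦃a b : V⦄ (p : Quiver.Path a b), ρ p → p.length = d)
    (hcov : DCovering d ρ)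
    {u : V} (α : u ⟶ u) (hαd : ρ (cpow (Quiver.Hom.toPath α) d))
    (h1 : ∀ ⦃w : V⦄ (β : u ⟶ w), (⟨u, w, β⟩ : SArrow V) ≠ ⟨u, u, α⟩ →
      ¬ ρ ((cpow (Quiver.Hom.toPath α) (d - 1)).comp (Quiver.Hom.toPath β)))
    (h2 : ∀ ⦃w : V⦄ (β : w ⟶ u), (⟨w, u, β⟩ : SArrow V) ≠ ⟨u, u, α⟩ →
      ¬ ρ ((Quiver.Hom.toPath β).comp (cpow (Quiver.Hom.toPath α) (d - 1)))) :
    ∀ ⦃x y : V⦄ (q : Quiver.Path x y), ρ q →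
      (⟨x, y, q⟩ : SPath V) ≠ ⟨u, u, cpow (Quiver.Hom.toPath α) d⟩ →
      ¬ ProperlyOverlaps q (cpow (Quiver.Hom.toPath α) d) ∧
      ¬ ProperlyOverlaps (cpow (Quiver.Hom.toPath α) d) q := by
  intro x y q hq hne
  have hql : q.length = d := hρlen q hq
  constructor
  · rintro ⟨ov, vv, hcomp, hov1, hov2, hv1⟩
    have hlen := congrArg Quiver.Path.length hcomp
    rw [Quiver.Path.length_comp, Quiver.Path.length_comp, aux_cpow_length, hql] at hlen
    rw [hql] at hov2
    obtain ⟨w, hw1, hw2⟩ := aux_align ov vv q (cpow (Quiver.Hom.toPath α) d) hcomp.symm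
      (by rw [aux_cpow_length]; omega)
    obtain ⟨hx, hvv, hw⟩ := aux_comp_eq_pow α d vv w hw1.symm
    subst hx
    have hwlen : vv.length + w.length = d := by
      have hh := congrArg Quiver.Path.length hw1
      rw [Quiver.Path.length_comp, aux_cpow_length] at hh
      omega
    have hdc : (cpow (Quiver.Hom.toPath α) vv.length).comp (cpow (Quiver.Hom.toPath α) w.length)
        = cpow (Quiver.Hom.toPath α) d := by
      rw [← aux_cpow_add, hwlen]
    have H0 := hcov (cpow (Quiver.Hom.toPath α) vv.length)
      (cpow (Quiver.Hom.toPath α) w.length) ov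
      (by rw [hdc]; exact hαd)
      (by rw [← eq_of_heq hw, ← hw2]; exact hq)
      (by rw [aux_cpow_length]; omega)
    obtain ⟨hy, hov⟩ := aux_ov_pow α d hd ρ h1 ov.length ov rfl
      (fun _ _ s hl hsub => H0 s hl (by rw [hdc]; exact hsub))
    subst hy
    exact hne (by rw [hw2, eq_of_heq hw, eq_of_heq hov, ← aux_cpow_add,
      show w.length + ov.length = d from by omega])
  · rintro ⟨ov, vv, hcomp, hov1, hov2, hv1⟩
    have hlen := congrArg Quiver.Path.length hcomp
    rw [Quiver.Path.length_comp, Quiver.Path.length_comp, aux_cpow_length, hql] at hlen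
    rw [aux_cpow_length] at hov2
    obtain ⟨w, hw1, hw2⟩ := aux_align ov vv (cpow (Quiver.Hom.toPath α) d) q hcomp.symm
      (by rw [hql]; omega)
    obtain ⟨hy, hw, hov⟩ := aux_comp_eq_pow α d w ov hw2.symm
    subst hy
    have H0 := hcov vv w ov
      (by rw [← hw1]; exact hq)
      (by rw [← hw2]; exact hαd)
      (by
        have hh := congrArg Quiver.Path.length hw2
        rw [Quiver.Path.length_comp, aux_cpow_length] at hh
        omega)
    obtain ⟨hx, hvv⟩ := aux_v_pow α d hd ρ h2 vv.length vv rfl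
      (fun _ _ s hl hsub => H0 s hl (by
        rw [hw2, ← Quiver.Path.comp_assoc] at hsub; exact hsub))
    subst hx
    have hwl : vv.length + w.length = d := by
      have hh := congrArg Quiver.Path.length hw1
      rw [Quiver.Path.length_comp, hql] at hh
      omega
    exact hne (by rw [hw1, eq_of_heq hvv, eq_of_heq hw, ← aux_cpow_add,
      show vv.length + w.length = d from hwl])
end

section
/- Let Q be a finite quiver, let d ≥ 2, and let ρ be a d-covering set of paths of Q, each of length d, such that for every m ≥ 2 every element of R^m has length δ(m). Let R ∈ R^n for some n ≥ 2, and suppose that R contains a subpath of the form Tα_1, where T = α_1⋯α_k is a closed trail with k ≥ d whose arrows α_1,…,α_k are pairwise distinct and α_1 is the first arrow of T. Then every path of length d that lies on T belongs to ρ, that is, ρ_T ⊆ ρ. -/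
open Quiver

universe u v

variable {V : Type u} [Quiver.{v + 1} V]

section Helpers

theorem comp_eq_split' {a b c b' : V} (Y : Quiver.Path b c) :
    ∀ (X : Quiver.Path a b) (Z : Quiver.Path a b') (W : Quiver.Path b' c),
    X.comp Y = Z.comp W → Y.length ≤ W.length →
    ∃ M : Quiver.Path b' b, X = Z.comp M ∧ W = M.comp Y := by
  induction Y with
  | nil =>
    intro X Z W h hl
    exact ⟨W, by simpa using h, (W.comp_nil).symm⟩
  | cons Y' e IH =>
    intro X Z W h hl
    cases W with
    | nil => simp at hl
    | cons W' f =>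
      rw [Quiver.Path.comp_cons, Quiver.Path.comp_cons] at h
      obtain rfl := Quiver.Path.obj_eq_of_cons_eq_cons h
      have h1 : X.comp Y' = Z.comp W' := eq_of_heq (Quiver.Path.heq_of_cons_eq_cons h)
      have h2 : e = f := eq_of_heq (Quiver.Path.hom_heq_of_cons_eq_cons h)
      obtain ⟨M, hM1, hM2⟩ := IH X Z W' h1 (by simpa using hl)
      exact ⟨M, hM1, by rw [hM2, h2, Quiver.Path.comp_cons]⟩

theorem split_suffix {a b : V} (r : Quiver.Path a b) :
    ∀ k, k ≤ r.length → ∃ (c : V) (p : Quiver.Path a c) (q : Quiver.Path c b),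
      r = p.comp q ∧ q.length = k := by
  induction r with
  | nil =>
    intro k hk
    simp only [Quiver.Path.length_nil, Nat.le_zero] at hk
    exact ⟨a, .nil, .nil, rfl, by simp [hk]⟩
  | cons r' e IH =>
    intro k hk
    cases k with
    | zero => exact ⟨_, _, .nil, (Quiver.Path.comp_nil _).symm, rfl⟩
    | succ k' =>
      obtain ⟨c, p, q, h1, h2⟩ := IH k' (by simp only [Quiver.Path.length_cons] at hk; omega)
      exact ⟨c, p, q.cons e, by rw [h1, Quiver.Path.comp_cons], by simp [h2]⟩

theorem subpath_trans {x y b c a e : V} {s : Quiver.Path x y} {t : Quiver.Path b c}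
    {r : Quiver.Path a e} (h1 : IsSubpathP s t) (h2 : IsSubpathP t r) : IsSubpathP s r := by
  obtain ⟨u1, v1, rfl⟩ := h1
  obtain ⟨u2, v2, rfl⟩ := h2
  exact ⟨u2.comp u1, v1.comp v2, by simp [Quiver.Path.comp_assoc]⟩

theorem subpath_length_le {x y a e : V} {s : Quiver.Path x y} {r : Quiver.Path a e}
    (h : IsSubpathP s r) : s.length ≤ r.length := by
  obtain ⟨u, v, rfl⟩ := h; simp [Quiver.Path.length_comp]; omega

theorem rho_of_subpath_full {ρ : PathSet V} {x y a e : V} {s : Quiver.Path x y}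
    {r : Quiver.Path a e} (h : IsSubpathP s r) (hl : s.length = r.length) (hr : ρ r) : ρ s := by
  obtain ⟨u, v, rfl⟩ := h
  simp only [Quiver.Path.length_comp] at hl
  have hu : u.length = 0 := by omega
  have hv : v.length = 0 := by omega
  cases u with
  | nil =>
    cases v with
    | nil => simpa using hr
    | cons _ _ => simp at hv
  | cons _ _ => simp at hu

/-- localize a subpath to the left factor -/
theorem subpath_left {a b e x y : V} {p : Quiver.Path a b} {q : Quiver.Path b e}
    {g : Quiver.Path a x} {s : Quiver.Path x y} {h : Quiver.Path y e}
    (heq : (g.comp s).comp h = p.comp q) (hl : q.length ≤ h.length) : IsSubpathP s p := by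
  obtain ⟨M, hM1, hM2⟩ := comp_eq_split' q p (g.comp s) h heq.symm hl
  exact ⟨g, M, hM1⟩

/-- localize a subpath to the right factor -/
theorem subpath_right {a b e x y : V} {p : Quiver.Path a b} {q : Quiver.Path b e}
    {g : Quiver.Path a x} {s : Quiver.Path x y} {h : Quiver.Path y e}
    (heq : (g.comp s).comp h = p.comp q) (hl : p.length ≤ g.length) : IsSubpathP s q := by
  have heq' : g.comp (s.comp h) = p.comp q := by rw [← Quiver.Path.comp_assoc]; exact heq
  have hlen : (g.comp (s.comp h)).length = (p.comp q).length := by rw [heq']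
  simp only [Quiver.Path.length_comp] at hlen
  obtain ⟨M, hM1, hM2⟩ := comp_eq_split' (s.comp h) g p q heq'
    (by simp only [Quiver.Path.length_comp]; omega)
  exact ⟨M, h, by rw [hM2, Quiver.Path.comp_assoc]⟩

theorem subpath_middle {a b c e x y : V} {p : Quiver.Path a b} {m : Quiver.Path b c}
    {q : Quiver.Path c e} {g : Quiver.Path a x} {s : Quiver.Path x y} {h : Quiver.Path y e}
    (heq : (g.comp s).comp h = (p.comp m).comp q) (hl1 : p.length ≤ g.length)
    (hl2 : q.length ≤ h.length) : IsSubpathP s m := by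
  obtain ⟨M, hM1, hM2⟩ := comp_eq_split' q (p.comp m) (g.comp s) h heq.symm hl2
  exact subpath_right hM1.symm hl1

theorem deltaF_ge {d m : ℕ} (hd : 1 ≤ d) (hm : 2 ≤ m) : d ≤ deltaF d m := by
  unfold deltaF
  split
  · have h1 : 1 ≤ m / 2 := by omega
    calc d = 1 * d := (one_mul d).symm
      _ ≤ m / 2 * d := Nat.mul_le_mul_right d h1
  · have h1 : 1 ≤ (m - 1) / 2 := by omega
    calc d = 1 * d := (one_mul d).symm
      _ ≤ (m - 1) / 2 * d := Nat.mul_le_mul_right d h1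
      _ ≤ (m - 1) / 2 * d + 1 := Nat.le_succ _

theorem length_cpow {a : V} (T : Quiver.Path a a) : ∀ m, (cpow T m).length = m * T.length := by
  intro m
  induction m with
  | zero => simp [cpow]
  | succ m IH => simp [cpow, Quiver.Path.length_comp, IH]; ring

/-- Every subpath of length `d` of an element of `R^n` (`n ≥ 2`) lies in `ρ`. -/
theorem key_subpath (d : ℕ) (hd : 2 ≤ d) (ρ : PathSet V)
    (hρlen : ∀ ⦃a b : V⦄ (p : Quiver.Path a b), ρ p → p.length = d)
    (hcov : DCovering d ρ)
    (hRlen : ∀ m, 2 ≤ m → ∀ ⦃a b : V⦄ (p : Quiver.Path a b), RSet ρ m p →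
      p.length = deltaF d m) :
    ∀ n, 2 ≤ n → ∀ ⦃a b : V⦄ (R : Quiver.Path a b), RSet ρ n R →
      ∀ ⦃x y : V⦄ (s : Quiver.Path x y), s.length = d → IsSubpathP s R → ρ s := by
  intro n
  induction n using Nat.strong_induction_on with
  | _ n IH =>
  rcases n with _ | _ | _ | m
  · omega
  · omega
  · intro _ a b R hR x y s hs hsub
    exact rho_of_subpath_full hsub (by rw [hs, hρlen R hR]) hR
  · intro _ a e R hR x y s hs hsub
    obtain ⟨c, Rp, u, hRp, rfl, b2, Rpp, p, hRpp, hRpeq, ⟨xq, q, hq, v, hov, hu1, hu2⟩, -⟩ := hR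
    have hqd : q.length = d := hρlen q hq
    have hdRp : d ≤ Rp.length := by
      rw [hRlen (m + 2) (by omega) Rp hRp]
      exact deltaF_ge (by omega) (by omega)
    obtain ⟨g, h, hgh⟩ := hsub
    by_cases hc : u.length ≤ h.length
    · exact IH (m + 2) (by omega) (by omega) Rp hRp s hs (subpath_left hgh.symm hc)
    · push_neg at hc
      obtain ⟨mid1, X, W, hXW, hWlen⟩ := split_suffix Rp d hdRp
      have hWρ : ρ W := IH (m + 2) (by omega) (by omega) Rp hRp W hWlen
        ⟨X, .nil, by rw [hXW, Quiver.Path.comp_nil]⟩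
      have hR2 : X.comp (W.comp u) = g.comp (s.comp h) := by
        rw [← Quiver.Path.comp_assoc, ← hXW, hgh, Quiver.Path.comp_assoc]
      obtain ⟨M, hM1, hM2⟩ := comp_eq_split' (s.comp h) g X (W.comp u) hR2.symm
        (by simp only [Quiver.Path.length_comp, hs, hWlen]; omega)
      have hud : u.length < d := by omega
      obtain ⟨mid2, W₁, W₂, hW12, hW2len⟩ := split_suffix W (d - u.length) (by omega)
      have hkey : (Rpp.comp v).comp q = (X.comp W₁).comp (W₂.comp u) := by
        calc (Rpp.comp v).comp q = Rpp.comp (v.comp q) := Quiver.Path.comp_assoc _ _ _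
          _ = Rpp.comp (p.comp u) := by rw [← hov]
          _ = Rp.comp u := by rw [hRpeq, Quiver.Path.comp_assoc]
          _ = (X.comp W₁).comp (W₂.comp u) := by
              rw [hXW, hW12]; simp [Quiver.Path.comp_assoc]
      obtain ⟨N, hN1, hN2⟩ := comp_eq_split' q (Rpp.comp v) (X.comp W₁) (W₂.comp u) hkey
        (by simp only [Quiver.Path.length_comp, hqd, hW2len]; omega)
      have hNlen : N.length = 0 := by
        have := congrArg Quiver.Path.length hN2
        simp only [Quiver.Path.length_comp, hqd, hW2len] at this
        omega
      cases N with
      | nil =>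
        rw [Quiver.Path.nil_comp] at hN2
        have hq2 : ρ (W₂.comp u) := hN2 ▸ hq
        have hρW' : ρ (W₁.comp W₂) := by rw [← hW12]; exact hWρ
        refine hcov W₁ W₂ u hρW' hq2 (by omega) s hs ?_
        exact ⟨M, h, by rw [← hW12, Quiver.Path.comp_assoc, ← hM2]⟩
      | cons _ _ => simp at hNlen

end Helpers

/-- if `R ∈ R^n` (`n ≥ 2`) contains a subpath `Tα₁` where `T` is a closed
trail of length `k ≥ d` with first arrow `α₁`, then `ρ_T ⊆ ρ`. -/
theorem stmt_5 {V : Type u} [Quiver.{v + 1} V] [Fintype V] [∀ a b : V, Fintype (a ⟶ b)]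
    (d : ℕ) (hd : 2 ≤ d) (ρ : PathSet V)
    (hρlen : ∀ ⦃a b : V⦄ (p : Quiver.Path a b), ρ p → p.length = d)
    (hcov : DCovering d ρ)
    (hRlen : ∀ m, 2 ≤ m → ∀ ⦃a b : V⦄ (p : Quiver.Path a b), RSet ρ m p →
      p.length = deltaF d m)
    (n : ℕ) (hn : 2 ≤ n) {a b : V} (R : Quiver.Path a b) (hR : RSet ρ n R)
    {u w : V} (T : Quiver.Path u u) (hT : IsClosedTrail T) (hk : d ≤ T.length)
    (α : u ⟶ w) (T' : Quiver.Path w u) (hfirst : T = (Quiver.Hom.toPath α).comp T')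
    (hsub : IsSubpathP (T.comp (Quiver.Hom.toPath α)) R) :
    RhoTSub d ρ T := by
  intro x0 y0 qq hqlen hlies
  have hTlen : T'.length + 1 = T.length := by
    rw [hfirst]; simp [Quiver.Path.length_comp, Quiver.Hom.toPath]; omega
  -- Step 1: every length-d subpath of `T·α` is in `ρ`.
  have hTα : ∀ ⦃x y : V⦄ (s : Quiver.Path x y), s.length = d →
      IsSubpathP s (T.comp (Quiver.Hom.toPath α)) → ρ s := by
    intro x y s hs hsubs
    exact key_subpath d hd ρ hρlen hcov hRlen n hn R hR s hs (subpath_trans hsubs hsub)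
  obtain ⟨c1, P₁, pp, hTsp, hpplen⟩ := split_suffix T (d - 1) (by omega)
  obtain ⟨c2, rr, T₂, hT'sp, hT₂len⟩ := split_suffix T' (T'.length - (d - 1)) (by omega)
  have hP₁len : P₁.length + pp.length = T.length := by
    have := congrArg Quiver.Path.length hTsp
    simp only [Quiver.Path.length_comp] at this; omega
  have hrrlen : rr.length + T₂.length = T'.length := by
    have := congrArg Quiver.Path.length hT'sp
    simp only [Quiver.Path.length_comp] at this; omega
  have hρ1 : ρ (pp.comp (Quiver.Hom.toPath α)) := by
    apply hTα _ (by simp [Quiver.Path.length_comp, hpplen, Quiver.Hom.toPath]; omega)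
    exact ⟨P₁, .nil, by rw [Quiver.Path.comp_nil, ← Quiver.Path.comp_assoc, ← hTsp]⟩
  have hρ2 : ρ ((Quiver.Hom.toPath α).comp rr) := by
    apply hTα _ ?_ ?_
    · simp only [Quiver.Path.length_comp, Quiver.Hom.toPath]
      simp; omega
    · refine ⟨.nil, T₂.comp (Quiver.Hom.toPath α), ?_⟩
      rw [Quiver.Path.nil_comp, hfirst, hT'sp]
      simp [Quiver.Path.comp_assoc]
  have hcovP := hcov pp (Quiver.Hom.toPath α) rr hρ1 hρ2 (by simp [Quiver.Hom.toPath])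
  -- Step 2: every length-d subpath of `T²` is in `ρ`.
  have hT2 : ∀ ⦃x y : V⦄ (s : Quiver.Path x y), s.length = d →
      IsSubpathP s (T.comp T) → ρ s := by
    intro x y s hs hsubs
    obtain ⟨g, h, hgh⟩ := hsubs
    have hglen : T.length + T.length = g.length + d + h.length := by
      have := congrArg Quiver.Path.length hgh
      simp only [Quiver.Path.length_comp, hs] at this; omega
    by_cases hA : T'.length ≤ h.length
    · have e1 : T.comp T = (T.comp (Quiver.Hom.toPath α)).comp T' := by
        nth_rewrite 2 [hfirst]
        rw [← Quiver.Path.comp_assoc]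
      exact hTα s hs (subpath_left (hgh.symm.trans e1) hA)
    · by_cases hB : T.length ≤ g.length
      · have hsT : IsSubpathP s T := subpath_right (hgh.symm.trans rfl) hB
        exact hTα s hs (subpath_trans hsT
          ⟨.nil, Quiver.Hom.toPath α, by rw [Quiver.Path.nil_comp]⟩)
      · push_neg at hA hB
        have e2 : T.comp T = (P₁.comp ((pp.comp (Quiver.Hom.toPath α)).comp rr)).comp T₂ := by
          nth_rewrite 1 [hTsp]
          rw [hfirst, hT'sp]
          simp [Quiver.Path.comp_assoc]
          exact (Quiver.Path.comp_assoc _ _ _).symm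
        have hl1 : P₁.length ≤ g.length := by omega
        have hl2 : T₂.length ≤ h.length := by omega
        exact hcovP s hs (subpath_middle (hgh.symm.trans e2) hl1 hl2)
  -- Step 3: every length-d subpath of `T^m` is in `ρ`.
  have hpow : ∀ m, ∀ ⦃x y : V⦄ (s : Quiver.Path x y), s.length = d →
      IsSubpathP s (cpow T m) → ρ s := by
    intro m
    induction m with
    | zero =>
      intro x y s hs hsubs
      have := subpath_length_le hsubs
      simp only [cpow, Quiver.Path.length_nil] at this; omega
    | succ m IHm =>
      intro x y s hs hsubs
      obtain ⟨g, h, hgh⟩ := hsubs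
      have hstep : cpow T (m + 1) = (cpow T m).comp T := rfl
      rw [hstep] at hgh
      by_cases hch : T.length ≤ h.length
      · exact IHm s hs (subpath_left hgh.symm hch)
      · push_neg at hch
        cases m with
        | zero =>
          have hgh' : T = (g.comp s).comp h := by
            rw [← hgh]; exact (Quiver.Path.nil_comp T).symm
          exact hT2 s hs (subpath_trans ⟨g, h, hgh'⟩
            ⟨Quiver.Path.nil, T, by rw [Quiver.Path.nil_comp]⟩)
        | succ m' =>
          have e3 : (cpow T (m' + 1)).comp T = (cpow T m').comp (T.comp T) := by
            show ((cpow T m').comp T).comp T = _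
            rw [Quiver.Path.comp_assoc]
          rw [e3] at hgh
          have hlg : (cpow T m').length ≤ g.length := by
            have h1 := congrArg Quiver.Path.length hgh
            simp only [Quiver.Path.length_comp, hs, length_cpow] at h1
            rw [length_cpow]
            have h2 : (m' + 2) * T.length = m' * T.length + T.length + T.length := by ring
            omega
          exact hT2 s hs (subpath_right hgh.symm hlg)
  obtain ⟨mm, -, hsubm⟩ := hlies
  exact hpow mm qq hqlen hsubm
end
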